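/- arXiv:1610.05199 — 7 statements merged into one kernel-verified Lean document; each statement's English description precedes it below -/
import Mathlib

section
/- The net-based and partition-based chaining functionals are equivalent: for every metric space (X,d) and every T ⊆ X one has γ₂*(T) ≤ γ₂(T), and there is a universal constant C such that γ₂(T) ≤ C·γ₂*(T). -/
open scoped ENNReal NNReal
open EMetric Set

noncomputable section

universe u

/-- Diameter of a set with respect to an extended distance function `D`. -/
def eDiam {X : Type u} (D : X → X → ℝ≥0∞) (A : Set X) : ℝ≥0∞ :=
  ⨆ x ∈ A, ⨆ y ∈ A, D x y

/-- Entropy numbers: `entN D n A` is the infimum over sets `S` of cardinality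
less than `2^(2^n)` of `sup_{x ∈ A} D(x, S)`. -/
def entN {X : Type u} (D : X → X → ℝ≥0∞) (n : ℕ) (A : Set X) : ℝ≥0∞ :=
  ⨅ (S : Finset X) (_ : S.card < 2 ^ 2 ^ n), ⨆ x ∈ A, ⨅ y ∈ S, D x y

/-- An admissible sequence of a set `T`: an increasing (refining) sequence of
partitions of `T`, the `n`-th one having fewer than `2^(2^n)` pieces.
`piece n x` is the element of the `n`-th partition containing `x`. -/
structure Admissible {X : Type u} (T : Set X) where
  piece : ℕ → X → Set X
  self_mem : ∀ n, ∀ x ∈ T, x ∈ piece n x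
  subset_base : ∀ n, ∀ x ∈ T, piece n x ⊆ T
  partition : ∀ n, ∀ x ∈ T, ∀ y ∈ T, y ∈ piece n x → piece n y = piece n x
  finite_pieces : ∀ n, {A : Set X | ∃ x ∈ T, piece n x = A}.Finite
  card_pieces : ∀ n, {A : Set X | ∃ x ∈ T, piece n x = A}.ncard < 2 ^ 2 ^ n
  nested : ∀ n, ∀ x ∈ T, piece (n + 1) x ⊆ piece n x

/-- The chaining functional `γ_{α,p}(T)` with respect to the extended distance `D`. -/
def gammaF {X : Type u} (D : X → X → ℝ≥0∞) (α p : ℝ) (T : Set X) : ℝ≥0∞ :=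
  ⨅ P : Admissible T,
    (⨆ x ∈ T, ∑' n : ℕ, ((2 : ℝ≥0∞) ^ ((n : ℝ) / α) * eDiam D (P.piece n x)) ^ p) ^ p⁻¹

/-- The net-based chaining functional `γ₂*(T)`: infimum over sequences of sets
`T_n ⊆ X` with `|T_n| < 2^(2^n)` of `sup_{x∈T} Σ_n 2^{n/2} d(x,T_n)`. -/
def gammaStar {X : Type u} [MetricSpace X] (T : Set X) : ℝ≥0∞ :=
  ⨅ (S : ℕ → Finset X) (_ : ∀ n, (S n).card < 2 ^ 2 ^ n),
    ⨆ x ∈ T, ∑' n : ℕ, (2 : ℝ≥0∞) ^ ((n : ℝ) / 2) * ⨅ y ∈ S n, edist x y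

-- Auxiliary development

lemma edist_le_eDiam {X : Type u} {D : X → X → ℝ≥0∞} {A : Set X} {x y : X}
    (hx : x ∈ A) (hy : y ∈ A) : D x y ≤ eDiam D A := by
  unfold eDiam
  exact le_trans (le_iSup₂ (f := fun y (_ : y ∈ A) => D x y) y hy)
    (le_iSup₂ (f := fun x (_ : x ∈ A) => ⨆ y ∈ A, D x y) x hx)

lemma eDiam_le {X : Type u} {D : X → X → ℝ≥0∞} {A : Set X} {r : ℝ≥0∞}
    (h : ∀ x ∈ A, ∀ y ∈ A, D x y ≤ r) : eDiam D A ≤ r := by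
  unfold eDiam; exact iSup₂_le fun x hx => iSup₂_le fun y hy => h x hx y hy

lemma eDiam_mono {X : Type u} {D : X → X → ℝ≥0∞} {A B : Set X}
    (h : A ⊆ B) : eDiam D A ≤ eDiam D B :=
  eDiam_le fun x hx y hy => edist_le_eDiam (h hx) (h hy)

lemma two_le_two_pow_two_pow (n : ℕ) : 2 ≤ 2 ^ 2 ^ n :=
  le_trans (by norm_num) (Nat.pow_le_pow_right (by norm_num) (Nat.one_le_two_pow))

def trivialAdmissible {X : Type u} (T : Set X) : Admissible T where
  piece := fun _ _ => T
  self_mem := fun _ _ hx => hx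
  subset_base := fun _ _ _ => le_rfl
  partition := fun _ _ _ _ _ _ => rfl
  finite_pieces := fun _ => (Set.finite_singleton T).subset (by rintro A ⟨x, hx, rfl⟩; rfl)
  card_pieces := fun n =>
    lt_of_le_of_lt (le_trans (Set.ncard_le_ncard (by rintro A ⟨x, hx, rfl⟩; rfl)
      (Set.finite_singleton T)) (by simp)) (two_le_two_pow_two_pow n)
  nested := fun _ _ _ => le_rfl

theorem dir1 (X : Type u) [MetricSpace X] (T : Set X) :
    gammaStar T ≤ gammaF (edist : X → X → ℝ≥0∞) 2 1 T := by
  rw [gammaF]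
  refine le_iInf fun P => ?_
  rcases T.eq_empty_or_nonempty with rfl | hT
  · refine le_trans (iInf₂_le (fun _ => (∅ : Finset X)) ?_) ?_ <;> simp
  · haveI : Nonempty X := ⟨hT.choose⟩
    classical
    set rep : Set X → X := fun A => if h : A.Nonempty then h.choose else Classical.arbitrary X
      with hrep
    have hrepmem : ∀ A : Set X, A.Nonempty → rep A ∈ A := fun A h => by
      rw [hrep]; simp only [dif_pos h]; exact h.choose_spec
    set S : ℕ → Finset X := fun n => ((P.finite_pieces n).toFinset).image rep with hS
    have hScard : ∀ n, (S n).card < 2 ^ 2 ^ n := fun n => by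
      refine lt_of_le_of_lt Finset.card_image_le ?_
      rw [← Set.ncard_eq_toFinset_card _ (P.finite_pieces n)]
      exact P.card_pieces n
    refine le_trans (iInf₂_le S hScard) ?_
    simp only [ENNReal.rpow_one, inv_one]
    refine iSup₂_le fun x hx => le_trans ?_ (le_iSup₂ (f := fun x (_ : x ∈ T) =>
      ∑' n : ℕ, (2 : ℝ≥0∞) ^ ((n : ℝ) / 2) * eDiam edist (P.piece n x)) x hx)
    refine ENNReal.tsum_le_tsum fun n => ?_
    refine mul_le_mul_right ?_ _
    have hne : (P.piece n x).Nonempty := ⟨x, P.self_mem n x hx⟩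
    have hmem : rep (P.piece n x) ∈ S n := by
      rw [hS]
      refine Finset.mem_image.2 ⟨P.piece n x, ?_, rfl⟩
      rw [Set.Finite.mem_toFinset]
      exact ⟨x, hx, rfl⟩
    exact le_trans (iInf₂_le _ hmem) (edist_le_eDiam (P.self_mem n x hx) (hrepmem _ hne))

-- numeric auxiliary lemmas
lemma aux_two_mul_add_one_lt (m : ℕ) : 2 * m + 1 < 2 ^ 2 ^ m := by
  induction m with
  | zero => norm_num
  | succ m ih =>
    have h1 : 2 * (m + 1) + 1 < 2 * (2 * m + 2) := by omega
    have h2 : 2 * (2 * m + 2) ≤ 2 * 2 ^ 2 ^ m := by omega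
    have h3 : 2 * 2 ^ 2 ^ m ≤ 2 ^ 2 ^ (m + 1) := by
      have h4 : 2 ≤ 2 ^ 2 ^ m := le_trans (by norm_num)
        (Nat.pow_le_pow_right (by norm_num) Nat.one_le_two_pow)
      calc 2 * 2 ^ 2 ^ m ≤ 2 ^ 2 ^ m * 2 ^ 2 ^ m := Nat.mul_le_mul_right _ h4
        _ = 2 ^ (2 ^ m + 2 ^ m) := (pow_add 2 _ _).symm
        _ = 2 ^ 2 ^ (m + 1) := by congr 1; rw [pow_succ]; omega
    omega

lemma aux_mul_lt_pow {a b B : ℕ} (ha : a < B) (hb : b < B) (hB : 0 < B) :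
    a * b < B * B :=
  Nat.mul_lt_mul'' ha hb

lemma aux_prod_bound (c : ℕ → ℕ) (hc : ∀ k, c k < 2 ^ 2 ^ k) (m : ℕ) :
    (∏ k ∈ Finset.range m, (c k * (2 * k + 1))) < 2 ^ 2 ^ (m + 1) := by
  induction m with
  | zero => simpa using Nat.one_lt_two_pow (by positivity)
  | succ m ih =>
    rw [Finset.prod_range_succ]
    have hfac : c m * (2 * m + 1) < 2 ^ 2 ^ (m + 1) := by
      have := aux_mul_lt_pow (hc m) (aux_two_mul_add_one_lt m) (by positivity)
      calc c m * (2 * m + 1) < 2 ^ 2 ^ m * 2 ^ 2 ^ m := this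
        _ = 2 ^ (2 ^ m + 2 ^ m) := (pow_add 2 _ _).symm
        _ ≤ 2 ^ 2 ^ (m + 1) := by
            apply Nat.pow_le_pow_right (by norm_num)
            rw [pow_succ]; omega
    calc (∏ k ∈ Finset.range m, (c k * (2 * k + 1))) * (c m * (2 * m + 1))
        < 2 ^ 2 ^ (m + 1) * 2 ^ 2 ^ (m + 1) := aux_mul_lt_pow ih hfac (by positivity)
      _ = 2 ^ (2 ^ (m + 1) + 2 ^ (m + 1)) := (pow_add 2 _ _).symm
      _ ≤ 2 ^ 2 ^ (m + 2) := by
          apply Nat.pow_le_pow_right (by norm_num)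
          rw [pow_succ 2 (m+1)]; omega

lemma one_le_rpow_half (k : ℕ) : (1 : ℝ≥0∞) ≤ 2 ^ ((k : ℝ) / 2) := by
  calc (1 : ℝ≥0∞) = 2 ^ (0 : ℝ) := (ENNReal.rpow_zero (x := 2)).symm
    _ ≤ 2 ^ ((k : ℝ) / 2) := ENNReal.rpow_le_rpow_of_exponent_le one_le_two (by positivity)

section Construction

variable {X : Type u} [MetricSpace X] (T : Set X) (S : ℕ → Finset X)

/-- distance to the `k`-th net -/
def fdist (k : ℕ) (x : X) : ℝ≥0∞ := ⨅ y ∈ S k, edist x y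

variable (hne : ∀ n, (S n).Nonempty)

/-- a nearest point in the `k`-th net -/
def nearF (k : ℕ) (x : X) : X :=
  (Finset.exists_min_image (S k) (fun y => edist x y) (hne k)).choose

lemma nearF_mem (k : ℕ) (x : X) : nearF S hne k x ∈ S k :=
  (Finset.exists_min_image (S k) (fun y => edist x y) (hne k)).choose_spec.1

lemma edist_nearF (k : ℕ) (x : X) : edist x (nearF S hne k x) = fdist S k x := by
  refine le_antisymm (le_iInf₂ fun y hy => ?_) (iInf₂_le _ (nearF_mem S hne k x))
  exact (Finset.exists_min_image (S k) (fun y => edist x y) (hne k)).choose_spec.2 y hy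

variable (V : ℝ≥0∞)

/-- the dyadic label of `x` at level `k` -/
def labelF (k : ℕ) (x : X) : ℕ :=
  Nat.findGreatest (fun j => fdist S k x ≤ 2⁻¹ ^ j * V) (2 * k)

lemma labelF_le (k : ℕ) (x : X) : labelF S V k x ≤ 2 * k := Nat.findGreatest_le _

def cellF (k : ℕ) (x : X) : Set X :=
  {z ∈ T | nearF S hne k z = nearF S hne k x ∧ labelF S V k z = labelF S V k x}

lemma cellF_subset (k : ℕ) (x : X) : cellF T S hne V k x ⊆ T := fun _ hz => hz.1

lemma self_mem_cellF (k : ℕ) {x : X} (hx : x ∈ T) : x ∈ cellF T S hne V k x :=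
  ⟨hx, rfl, rfl⟩

lemma cellF_eq {k : ℕ} {x y : X} (hy : y ∈ cellF T S hne V k x) :
    cellF T S hne V k y = cellF T S hne V k x := by
  ext z
  simp only [cellF, Set.mem_setOf_eq, hy.2.1, hy.2.2]

def pieceF (n : ℕ) (x : X) : Set X :=
  if n < 2 then T else ⋂ k : Fin (n - 1), cellF T S hne V (k : ℕ) x

end Construction

section Construction2

variable {X : Type u} [MetricSpace X] (T : Set X) (S : ℕ → Finset X)
  (hne : ∀ n, (S n).Nonempty) (V : ℝ≥0∞)

lemma pieceF_card (hcard : ∀ n, (S n).card < 2 ^ 2 ^ n) (n : ℕ) :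
    ∃ FS : Finset (Set X), {A : Set X | ∃ x ∈ T, pieceF T S hne V n x = A} ⊆ ↑FS ∧
      FS.card < 2 ^ 2 ^ n := by
  classical
  by_cases h : n < 2
  · refine ⟨{T}, ?_, ?_⟩
    · rintro A ⟨x, hx, rfl⟩
      simp only [pieceF, if_pos h, Finset.coe_singleton, Set.mem_singleton_iff]
    · exact lt_of_le_of_lt (by simp) (lt_of_lt_of_le one_lt_two (two_le_two_pow_two_pow n))
  · set F : (Fin (n - 1) → X × ℕ) → Set X := fun v =>
      ⋂ k : Fin (n - 1), {z ∈ T | nearF S hne (k : ℕ) z = (v k).1 ∧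
        labelF S V (k : ℕ) z = (v k).2} with hF
    set key : X → (Fin (n - 1) → X × ℕ) := fun x k =>
      (nearF S hne (k : ℕ) x, labelF S V (k : ℕ) x) with hkey
    set KF : Finset (Fin (n - 1) → X × ℕ) :=
      Fintype.piFinset (fun k : Fin (n - 1) => (S (k : ℕ)) ×ˢ Finset.range (2 * (k : ℕ) + 1))
      with hKF
    refine ⟨KF.image F, ?_, ?_⟩
    · rintro A ⟨x, hx, rfl⟩
      refine Finset.mem_coe.2 (Finset.mem_image.2 ⟨key x, ?_, ?_⟩)
      · rw [hKF]
        refine Fintype.mem_piFinset.2 fun k => ?_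
        refine Finset.mem_product.2 ⟨nearF_mem S hne _ x, Finset.mem_range.2 ?_⟩
        exact Nat.lt_succ_of_le (labelF_le S V _ x)
      · simp only [pieceF, if_neg h, hF, hkey, cellF]
    · refine lt_of_le_of_lt Finset.card_image_le ?_
      rw [hKF, Fintype.card_piFinset]
      have hcc : ∀ k : Fin (n - 1), ((S (k : ℕ)) ×ˢ Finset.range (2 * (k : ℕ) + 1)).card
          = (S (k : ℕ)).card * (2 * (k : ℕ) + 1) := by
        intro k; rw [Finset.card_product, Finset.card_range]
      rw [Finset.prod_congr rfl (fun k _ => hcc k)]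
      rw [Fin.prod_univ_eq_prod_range (fun k => (S k).card * (2 * k + 1)) (n - 1)]
      have := aux_prod_bound (fun k => (S k).card) hcard (n - 1)
      have hn1 : n - 1 + 1 = n := by omega
      rwa [hn1] at this

def mainAdmissible (hcard : ∀ n, (S n).card < 2 ^ 2 ^ n) : Admissible T where
  piece := pieceF T S hne V
  self_mem := by
    intro n x hx
    simp only [pieceF]
    split
    · exact hx
    · exact Set.mem_iInter.2 fun k => self_mem_cellF T S hne V _ hx
  subset_base := by
    intro n x hx y hy
    simp only [pieceF] at hy
    by_cases h : n < 2
    · rwa [if_pos h] at hy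
    · rw [if_neg h] at hy
      exact (Set.mem_iInter.1 hy ⟨0, by omega⟩).1
  partition := by
    intro n x hx y hy hmem
    simp only [pieceF] at hmem ⊢
    by_cases h : n < 2
    · simp only [if_pos h]
    · simp only [if_neg h] at hmem ⊢
      exact Set.iInter_congr fun k => cellF_eq T S hne V (Set.mem_iInter.1 hmem k)
  finite_pieces := by
    intro n
    obtain ⟨FS, hsub, -⟩ := pieceF_card T S hne V hcard n
    exact FS.finite_toSet.subset hsub
  card_pieces := by
    intro n
    obtain ⟨FS, hsub, hlt⟩ := pieceF_card T S hne V hcard n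
    refine lt_of_le_of_lt ?_ hlt
    have := Set.ncard_le_ncard hsub FS.finite_toSet
    rwa [Set.ncard_coe_finset] at this
  nested := by
    intro n x hx y hy
    simp only [pieceF] at hy ⊢
    by_cases h : n < 2
    · rw [if_pos h]
      by_cases h0 : n = 0
      · subst h0; rwa [if_pos (by norm_num)] at hy
      · have h1 : n = 1 := by omega
        subst h1
        rw [if_neg (by norm_num)] at hy
        exact (Set.mem_iInter.1 hy ⟨0, by omega⟩).1
    · rw [if_neg h]
      rw [if_neg (by omega)] at hy
      refine Set.mem_iInter.2 fun k => ?_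
      exact Set.mem_iInter.1 hy ⟨(k : ℕ), by omega⟩

end Construction2

section Estimates

variable {X : Type u} [MetricSpace X] {T : Set X} {S : ℕ → Finset X}
  {hne : ∀ n, (S n).Nonempty} {V : ℝ≥0∞}
  (hV1 : ∀ x ∈ T, ∑' k : ℕ, (2 : ℝ≥0∞) ^ ((k : ℝ) / 2) * fdist S k x ≤ V)

include hV1

lemma term_le (k : ℕ) {x : X} (hx : x ∈ T) :
    (2 : ℝ≥0∞) ^ ((k : ℝ) / 2) * fdist S k x ≤ V :=
  le_trans (ENNReal.le_tsum k) (hV1 x hx)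

lemma fdist_le (k : ℕ) {x : X} (hx : x ∈ T) : fdist S k x ≤ V := by
  calc fdist S k x = 1 * fdist S k x := (one_mul _).symm
    _ ≤ (2 : ℝ≥0∞) ^ ((k : ℝ) / 2) * fdist S k x :=
        mul_le_mul_left (one_le_rpow_half k) _
    _ ≤ V := term_le hV1 k hx

lemma fdist_le_label (k : ℕ) {x : X} (hx : x ∈ T) :
    fdist S k x ≤ 2⁻¹ ^ (labelF S V k x) * V := by
  unfold labelF
  refine Nat.findGreatest_spec (P := fun j => fdist S k x ≤ 2⁻¹ ^ j * V) (Nat.zero_le _) ?_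
  simpa using fdist_le hV1 k hx

lemma label_lt_bound (k : ℕ) {x : X} (hx : x ∈ T) (hl : labelF S V k x < 2 * k) :
    2⁻¹ ^ (labelF S V k x) * V ≤ 2 * fdist S k x := by
  have hng : ¬ (fdist S k x ≤ 2⁻¹ ^ (labelF S V k x + 1) * V) := by
    unfold labelF at hl ⊢
    exact Nat.findGreatest_is_greatest (Nat.lt_succ_self _) (Nat.succ_le_of_lt hl)
  have hle : 2⁻¹ ^ (labelF S V k x + 1) * V ≤ fdist S k x :=
    le_of_lt (lt_of_not_ge hng)
  have h1 : (2 : ℝ≥0∞) * 2⁻¹ = 1 := ENNReal.mul_inv_cancel two_ne_zero ENNReal.ofNat_ne_top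
  calc 2⁻¹ ^ (labelF S V k x) * V = (2 * 2⁻¹) * (2⁻¹ ^ (labelF S V k x) * V) := by
        rw [h1, one_mul]
    _ = 2 * (2⁻¹ ^ (labelF S V k x + 1) * V) := by rw [pow_succ]; ring
    _ ≤ 2 * fdist S k x := mul_le_mul_right hle 2

lemma cell_diam_le (k : ℕ) {x : X} (hx : x ∈ T) :
    eDiam edist (cellF T S hne V k x) ≤ 2 * (2⁻¹ ^ (labelF S V k x) * V) := by
  refine eDiam_le fun y hy z hz => ?_
  calc edist y z ≤ edist y (nearF S hne k y) + edist (nearF S hne k y) z := edist_triangle _ _ _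
    _ = fdist S k y + fdist S k z := by
        rw [edist_nearF, hy.2.1, ← hz.2.1, edist_comm, edist_nearF]
    _ ≤ 2⁻¹ ^ (labelF S V k x) * V + 2⁻¹ ^ (labelF S V k x) * V := by
        refine add_le_add ?_ ?_
        · rw [← hy.2.2]; exact fdist_le_label hV1 k hy.1
        · rw [← hz.2.2]; exact fdist_le_label hV1 k hz.1
    _ = 2 * (2⁻¹ ^ (labelF S V k x) * V) := (two_mul _).symm

omit hV1 in
lemma rpow_half_mul_pow_le (k : ℕ) :
    (2 : ℝ≥0∞) ^ ((k : ℝ) / 2) * 2⁻¹ ^ (2 * k) ≤ 2⁻¹ ^ k := by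
  have hm : ∀ m : ℕ, ((2 : ℝ≥0∞))⁻¹ ^ m = 2 ^ (-(m : ℝ)) := by
    intro m
    rw [ENNReal.rpow_neg, ENNReal.rpow_natCast, ← ENNReal.inv_pow]
  rw [hm, hm, ← ENNReal.rpow_add _ _ two_ne_zero ENNReal.ofNat_ne_top]
  refine ENNReal.rpow_le_rpow_of_exponent_le one_le_two ?_
  have : (0 : ℝ) ≤ (k : ℝ) := Nat.cast_nonneg k
  push_cast
  linarith

lemma level_bound (k : ℕ) {x : X} (hx : x ∈ T) :
    (2 : ℝ≥0∞) ^ ((k : ℝ) / 2) * eDiam edist (cellF T S hne V k x) ≤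
      4 * ((2 : ℝ≥0∞) ^ ((k : ℝ) / 2) * fdist S k x) + 2 * (2⁻¹ ^ k * V) := by
  rcases lt_or_eq_of_le (labelF_le S V k x) with hl | hl
  · refine le_trans ?_ le_self_add
    calc (2 : ℝ≥0∞) ^ ((k : ℝ) / 2) * eDiam edist (cellF T S hne V k x)
        ≤ (2 : ℝ≥0∞) ^ ((k : ℝ) / 2) * (2 * (2 * fdist S k x)) :=
          mul_le_mul_right (le_trans (cell_diam_le hV1 k hx)
            (mul_le_mul_right (label_lt_bound hV1 k hx hl) 2)) _
      _ = 4 * ((2 : ℝ≥0∞) ^ ((k : ℝ) / 2) * fdist S k x) := by ring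
  · refine le_trans ?_ le_add_self
    calc (2 : ℝ≥0∞) ^ ((k : ℝ) / 2) * eDiam edist (cellF T S hne V k x)
        ≤ (2 : ℝ≥0∞) ^ ((k : ℝ) / 2) * (2 * (2⁻¹ ^ (2 * k) * V)) := by
          refine mul_le_mul_right ?_ _
          rw [← hl]  -- replace 2*k by label? hl : labelF = 2*k
          exact cell_diam_le hV1 k hx
      _ = 2 * (((2 : ℝ≥0∞) ^ ((k : ℝ) / 2) * 2⁻¹ ^ (2 * k)) * V) := by ring
      _ ≤ 2 * (2⁻¹ ^ k * V) := by
          exact mul_le_mul_right (mul_le_mul_left (rpow_half_mul_pow_le k) V) 2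

lemma cells_sum_le {x : X} (hx : x ∈ T) :
    ∑' k : ℕ, (2 : ℝ≥0∞) ^ ((k : ℝ) / 2) * eDiam edist (cellF T S hne V k x) ≤ 8 * V := by
  calc ∑' k : ℕ, (2 : ℝ≥0∞) ^ ((k : ℝ) / 2) * eDiam edist (cellF T S hne V k x)
      ≤ ∑' k : ℕ, (4 * ((2 : ℝ≥0∞) ^ ((k : ℝ) / 2) * fdist S k x) + 2 * (2⁻¹ ^ k * V)) :=
        ENNReal.tsum_le_tsum fun k => level_bound hV1 k hx
    _ = 4 * (∑' k : ℕ, (2 : ℝ≥0∞) ^ ((k : ℝ) / 2) * fdist S k x)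
        + (2 * V) * ∑' k : ℕ, (2 : ℝ≥0∞)⁻¹ ^ k := by
        rw [ENNReal.tsum_add]
        congr 1
        · exact ENNReal.tsum_mul_left
        · rw [← ENNReal.tsum_mul_left]
          exact tsum_congr fun k => by ring
    _ ≤ 4 * V + (2 * V) * 2 := by
        refine add_le_add (mul_le_mul_right (hV1 x hx) 4) ?_
        refine mul_le_mul_right ?_ _
        rw [ENNReal.tsum_geometric, ENNReal.one_sub_inv_two, inv_inv]
    _ = 8 * V := by ring

end Estimates

section Final

variable {X : Type u} [MetricSpace X] {T : Set X} {S : ℕ → Finset X}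
  (hne : ∀ n, (S n).Nonempty) {V : ℝ≥0∞}
  (hcard : ∀ n, (S n).card < 2 ^ 2 ^ n)
  (hV1 : ∀ x ∈ T, ∑' k : ℕ, (2 : ℝ≥0∞) ^ ((k : ℝ) / 2) * fdist S k x ≤ V)

include hne hcard hV1

lemma diam_T_le : eDiam edist T ≤ 2 * V := by
  obtain ⟨t0, ht0⟩ : ∃ t0, S 0 = {t0} := by
    refine Finset.card_eq_one.1 ?_
    have h1 := hcard 0
    have h2 : 0 < (S 0).card := Finset.card_pos.2 (hne 0)
    simp only [pow_zero, pow_one] at h1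
    omega
  have hf0 : ∀ z : X, fdist S 0 z = edist z t0 := by
    intro z; rw [fdist, ht0]; simp
  refine eDiam_le fun x hx y hy => ?_
  calc edist x y ≤ edist x t0 + edist t0 y := edist_triangle _ _ _
    _ = fdist S 0 x + fdist S 0 y := by rw [hf0 x, hf0 y, edist_comm t0 y]
    _ ≤ V + V := add_le_add (fdist_le hV1 0 hx) (fdist_le hV1 0 hy)
    _ = 2 * V := (two_mul V).symm

lemma total_sum_le {x : X} (hx : x ∈ T) :
    ∑' n : ℕ, (2 : ℝ≥0∞) ^ ((n : ℝ) / 2) * eDiam edist (pieceF T S hne V n x) ≤ 22 * V := by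
  set g : ℕ → ℝ≥0∞ := fun n =>
    (2 : ℝ≥0∞) ^ ((n : ℝ) / 2) * eDiam edist (pieceF T S hne V n x) with hg
  have hsplit : ∑' n, g n = g 0 + (g 1 + ∑' n, g (n + 2)) := by
    rw [tsum_eq_zero_add' ENNReal.summable]
    congr 1
    rw [tsum_eq_zero_add' ENNReal.summable]
  have hdT := diam_T_le hne hcard hV1
  have h0 : g 0 ≤ 2 * V := by
    rw [hg]
    simp only [pieceF, Nat.cast_zero, zero_div, ENNReal.rpow_zero, one_mul, if_pos
      (by norm_num : (0 : ℕ) < 2)]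
    exact hdT
  have h1 : g 1 ≤ 2 * (2 * V) := by
    rw [hg]
    simp only [pieceF, if_pos (by norm_num : (1 : ℕ) < 2)]
    have hco' : (2 : ℝ≥0∞) ^ (((1 : ℕ) : ℝ) / 2) ≤ 2 := by
      calc (2 : ℝ≥0∞) ^ (((1 : ℕ) : ℝ) / 2) ≤ 2 ^ (1 : ℝ) :=
            ENNReal.rpow_le_rpow_of_exponent_le one_le_two (by norm_num)
        _ = 2 := ENNReal.rpow_one 2
    exact mul_le_mul' hco' hdT
  have h2 : ∑' n, g (n + 2) ≤ 16 * V := by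
    have hterm : ∀ n : ℕ, g (n + 2) ≤
        2 * ((2 : ℝ≥0∞) ^ ((n : ℝ) / 2) * eDiam edist (cellF T S hne V n x)) := by
      intro n
      have hsub : pieceF T S hne V (n + 2) x ⊆ cellF T S hne V n x := by
        rw [pieceF, if_neg (by omega)]
        exact Set.iInter_subset _ (⟨n, by omega⟩ : Fin (n + 2 - 1))
      have hco : (2 : ℝ≥0∞) ^ (((n + 2 : ℕ) : ℝ) / 2) = 2 ^ ((n : ℝ) / 2) * 2 := by
        rw [show ((n + 2 : ℕ) : ℝ) / 2 = (n : ℝ) / 2 + 1 by push_cast; ring,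
          ENNReal.rpow_add _ _ two_ne_zero ENNReal.ofNat_ne_top, ENNReal.rpow_one]
      rw [hg]
      calc (2 : ℝ≥0∞) ^ (((n + 2 : ℕ) : ℝ) / 2) * eDiam edist (pieceF T S hne V (n + 2) x)
          ≤ (2 ^ ((n : ℝ) / 2) * 2) * eDiam edist (cellF T S hne V n x) := by
            rw [hco]; exact mul_le_mul_right (eDiam_mono hsub) _
        _ = 2 * ((2 : ℝ≥0∞) ^ ((n : ℝ) / 2) * eDiam edist (cellF T S hne V n x)) := by ring
    calc ∑' n, g (n + 2)
        ≤ ∑' n : ℕ, 2 * ((2 : ℝ≥0∞) ^ ((n : ℝ) / 2) * eDiam edist (cellF T S hne V n x)) :=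
          ENNReal.tsum_le_tsum hterm
      _ = 2 * ∑' n : ℕ, (2 : ℝ≥0∞) ^ ((n : ℝ) / 2) * eDiam edist (cellF T S hne V n x) :=
          ENNReal.tsum_mul_left
      _ ≤ 2 * (8 * V) := mul_le_mul_right (cells_sum_le hV1 hx) 2
      _ = 16 * V := by ring
  rw [hsplit]
  calc g 0 + (g 1 + ∑' n, g (n + 2)) ≤ 2 * V + (2 * (2 * V) + 16 * V) :=
        add_le_add h0 (add_le_add h1 h2)
    _ = 22 * V := by ring

lemma gamma_le_of_nets : gammaF (edist : X → X → ℝ≥0∞) 2 1 T ≤ 22 * V := by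
  refine le_trans (iInf_le _ (mainAdmissible T S hne V hcard)) ?_
  simp only [ENNReal.rpow_one, inv_one]
  exact iSup₂_le fun x hx => total_sum_le hne hcard hV1 hx

end Final

theorem dir2 (X : Type u) [MetricSpace X] (T : Set X) :
    gammaF (edist : X → X → ℝ≥0∞) 2 1 T ≤ 64 * gammaStar T := by
  classical
  have key : ∀ S : ℕ → Finset X, (∀ n, (S n).card < 2 ^ 2 ^ n) →
      gammaF (edist : X → X → ℝ≥0∞) 2 1 T ≤
        64 * (⨆ x ∈ T, ∑' n : ℕ, (2 : ℝ≥0∞) ^ ((n : ℝ) / 2) * ⨅ y ∈ S n, edist x y) := by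
    intro S hcard
    by_cases hne : ∀ n, (S n).Nonempty
    · have hV1 : ∀ x ∈ T, ∑' k : ℕ, (2 : ℝ≥0∞) ^ ((k : ℝ) / 2) * fdist S k x ≤
          (⨆ x ∈ T, ∑' n : ℕ, (2 : ℝ≥0∞) ^ ((n : ℝ) / 2) * ⨅ y ∈ S n, edist x y) := by
        intro x hx
        exact le_iSup₂ (f := fun x (_ : x ∈ T) =>
          ∑' n : ℕ, (2 : ℝ≥0∞) ^ ((n : ℝ) / 2) * ⨅ y ∈ S n, edist x y) x hx
      refine le_trans (gamma_le_of_nets hne hcard hV1) ?_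
      exact mul_le_mul_left (by norm_num) _
    · rcases T.eq_empty_or_nonempty with rfl | hT
      · refine le_trans (iInf_le _ (trivialAdmissible ∅)) ?_
        simp
      · push_neg at hne
        obtain ⟨n, hn⟩ := hne
        obtain ⟨x, hx⟩ := hT
        have hinf : (⨅ y ∈ S n, edist x y) = ∞ := by
          rw [hn]; simp
        have hW : (⨆ x ∈ T, ∑' n : ℕ, (2 : ℝ≥0∞) ^ ((n : ℝ) / 2) * ⨅ y ∈ S n, edist x y)
            = ∞ := by
          refine top_le_iff.1 (le_trans ?_ (le_iSup₂ (f := fun x (_ : x ∈ T) =>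
            ∑' n : ℕ, (2 : ℝ≥0∞) ^ ((n : ℝ) / 2) * ⨅ y ∈ S n, edist x y) x hx))
          refine le_trans ?_ (ENNReal.le_tsum n)
          rw [hinf, ENNReal.mul_top (ENNReal.rpow_pos two_pos ENNReal.ofNat_ne_top).ne']
        rw [hW, ENNReal.mul_top (by norm_num)]
        exact le_top
  calc gammaF (edist : X → X → ℝ≥0∞) 2 1 T
      ≤ ⨅ (S : ℕ → Finset X) (_ : ∀ n, (S n).card < 2 ^ 2 ^ n),
          64 * (⨆ x ∈ T, ∑' n : ℕ, (2 : ℝ≥0∞) ^ ((n : ℝ) / 2) * ⨅ y ∈ S n, edist x y) :=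
        le_iInf₂ fun S hS => key S hS
    _ = 64 * gammaStar T := by
        rw [gammaStar]
        rw [ENNReal.mul_iInf' (fun h => absurd h (by norm_num))
          (fun h => absurd h (by norm_num))]
        exact iInf_congr fun S => (ENNReal.mul_iInf' (fun h => absurd h (by norm_num))
          (fun h => absurd h (by norm_num))).symm


/-- The net-based and partition-based chaining functionals are equivalent:
`γ₂*(T) ≤ γ₂(T)` and `γ₂(T) ≤ C·γ₂*(T)` for a universal constant `C`. -/
theorem gammaStar_equiv_gamma :
    ∃ C : ℝ≥0∞, 0 < C ∧ C ≠ ∞ ∧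
      ∀ (X : Type u) [MetricSpace X] (T : Set X),
        gammaStar T ≤ gammaF (edist : X → X → ℝ≥0∞) 2 1 T ∧
        gammaF (edist : X → X → ℝ≥0∞) 2 1 T ≤ C * gammaStar T := by
  exact ⟨64, by norm_num, by norm_num, fun X _ T => ⟨dir1 X T, dir2 X T⟩⟩
end
end

section
/- (Dudley-type inequality for chaining functionals.) Let (X,d) be a metric space, T ⊆ X, α > 0 and p ≥ 1. Then there is a constant C depending only on α such that γ_{α,p}(T) ≤ C · [ Σ_{n≥0} (2^{n/α} e_n(T))^p ]^{1/p}. -/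
open scoped ENNReal NNReal
open EMetric Set

noncomputable section

universe u

section Aux
variable {X : Type u} [MetricSpace X]

noncomputable def dudleyNear (S : Finset X) (hS : S.Nonempty) (x : X) : X :=
  (S.exists_min_image (fun y => edist x y) hS).choose

lemma dudleyNear_mem (S : Finset X) (hS : S.Nonempty) (x : X) : dudleyNear S hS x ∈ S :=
  (S.exists_min_image (fun y => edist x y) hS).choose_spec.1

lemma dudleyNear_min (S : Finset X) (hS : S.Nonempty) (x : X) :
    ∀ y ∈ S, edist x (dudleyNear S hS x) ≤ edist x y :=
  (S.exists_min_image (fun y => edist x y) hS).choose_spec.2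

lemma dudley_prod_lt (c : ℕ → ℕ) (hc : ∀ k, c k < 2 ^ 2 ^ k) (n : ℕ) :
    ∏ k ∈ Finset.range n, c k < 2 ^ 2 ^ n := by
  induction n with
  | zero => simp
  | succ n ih =>
    have h2 : (2:ℕ) ^ 2 ^ (n+1) = 2 ^ 2 ^ n * 2 ^ 2 ^ n := by
      rw [pow_succ, pow_mul]; ring
    rw [Finset.prod_range_succ, h2]
    exact Nat.mul_lt_mul'' ih (hc n)

def dudleyPiece (T : Set X) (S : ℕ → Finset X) (hS : ∀ n, (S n).Nonempty) (n : ℕ) (x : X) :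
    Set X :=
  {y ∈ T | ∀ k, k < n → dudleyNear (S k) (hS k) y = dudleyNear (S k) (hS k) x}

lemma dudley_pieces_subset (T : Set X) (S : ℕ → Finset X) (hS : ∀ n, (S n).Nonempty) (n : ℕ) :
    {A : Set X | ∃ x ∈ T, dudleyPiece T S hS n x = A} ⊆
      (fun f : Fin n → X => {y ∈ T | ∀ k : Fin n, dudleyNear (S k) (hS k) y = f k}) ''
        ↑(Fintype.piFinset fun k : Fin n => S k) := by
  rintro A ⟨x, hx, rfl⟩
  refine ⟨fun k => dudleyNear (S k) (hS k) x, ?_, ?_⟩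
  · simp only [Finset.mem_coe, Fintype.mem_piFinset]
    exact fun k => dudleyNear_mem _ _ _
  · ext y
    simp only [dudleyPiece, mem_setOf_eq, mem_sep_iff]
    exact ⟨fun ⟨h1, h2⟩ => ⟨h1, fun k hk => h2 ⟨k, hk⟩⟩, fun ⟨h1, h2⟩ => ⟨h1, fun k => h2 k k.2⟩⟩

def dudleyAdm (T : Set X) (S : ℕ → Finset X) (hS : ∀ n, (S n).Nonempty)
    (hcard : ∀ n, (S n).card < 2 ^ 2 ^ n) : Admissible T where
  piece := dudleyPiece T S hS
  self_mem n x hx := ⟨hx, fun k _ => rfl⟩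
  subset_base n x _ := fun y hy => hy.1
  partition n x hx y hy hyx := by
    ext z
    simp only [dudleyPiece, mem_sep_iff]
    exact ⟨fun ⟨h1, h2⟩ => ⟨h1, fun k hk => (h2 k hk).trans (hyx.2 k hk)⟩,
      fun ⟨h1, h2⟩ => ⟨h1, fun k hk => (h2 k hk).trans (hyx.2 k hk).symm⟩⟩
  finite_pieces n :=
    Set.Finite.subset (Set.Finite.image _ (Fintype.piFinset fun k : Fin n => S k).finite_toSet)
      (dudley_pieces_subset T S hS n)
  card_pieces n := by
    have hfin : ((fun f : Fin n → X =>
        {y ∈ T | ∀ k : Fin n, dudleyNear (S k) (hS k) y = f k}) ''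
        ↑(Fintype.piFinset fun k : Fin n => S k)).Finite :=
      Set.Finite.image _ (Fintype.piFinset fun k : Fin n => S k).finite_toSet
    calc {A : Set X | ∃ x ∈ T, dudleyPiece T S hS n x = A}.ncard
        ≤ _ := Set.ncard_le_ncard (dudley_pieces_subset T S hS n) hfin
      _ ≤ (↑(Fintype.piFinset fun k : Fin n => S k) : Set (Fin n → X)).ncard :=
          Set.ncard_image_le (Fintype.piFinset fun k : Fin n => S k).finite_toSet
      _ = (Fintype.piFinset fun k : Fin n => S k).card := Set.ncard_coe_finset _
      _ = ∏ k : Fin n, (S k).card := Fintype.card_piFinset _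
      _ = ∏ k ∈ Finset.range n, (S k).card := Fin.prod_univ_eq_prod_range (fun k => (S k).card) n
      _ < 2 ^ 2 ^ n := dudley_prod_lt _ hcard n
  nested n x _ := fun y hy => ⟨hy.1, fun k hk => hy.2 k (hk.trans (Nat.lt_succ_self n))⟩

lemma dudley_eDiam_piece (T : Set X) (S : ℕ → Finset X) (hS : ∀ n, (S n).Nonempty)
    (h1 : (S 0).card ≤ 1) (D : ℕ → ℝ≥0∞)
    (hD : ∀ k, ∀ w ∈ T, edist w (dudleyNear (S k) (hS k) w) ≤ D k)
    (n : ℕ) (x : X) :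
    eDiam edist (dudleyPiece T S hS n x) ≤ 2 * D (n - 1) := by
  have key : ∀ y ∈ dudleyPiece T S hS n x, ∀ z ∈ dudleyPiece T S hS n x,
      dudleyNear (S (n-1)) (hS (n-1)) y = dudleyNear (S (n-1)) (hS (n-1)) z := by
    intro y hy z hz
    cases n with
    | zero =>
      exact Finset.card_le_one.mp h1 _ (dudleyNear_mem _ _ _) _ (dudleyNear_mem _ _ _)
    | succ m =>
      simpa using (hy.2 m (Nat.lt_succ_self m)).trans (hz.2 m (Nat.lt_succ_self m)).symm
  unfold eDiam
  refine iSup₂_le fun y hy => iSup₂_le fun z hz => ?_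
  have h2 : edist (dudleyNear (S (n-1)) (hS (n-1)) y) z ≤ D (n-1) := by
    rw [edist_comm, key y hy z hz]
    exact hD _ z hz.1
  calc edist y z ≤ edist y (dudleyNear (S (n-1)) (hS (n-1)) y)
        + edist (dudleyNear (S (n-1)) (hS (n-1)) y) z := edist_triangle _ _ _
    _ ≤ D (n-1) + D (n-1) := add_le_add (hD _ y hy.1) h2
    _ = 2 * D (n-1) := (two_mul _).symm

lemma dudley_exists_net (T : Set X) (hT : T.Nonempty) (n : ℕ) {ε : ℝ≥0∞} (hε : ε ≠ 0)
    (hε' : ε ≠ ∞) (hfin : entN (edist : X → X → ℝ≥0∞) n T ≠ ∞) :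
    ∃ S : Finset X, S.Nonempty ∧ S.card < 2 ^ 2 ^ n ∧
      ∀ w ∈ T, (⨅ y ∈ S, edist w y) ≤ entN (edist : X → X → ℝ≥0∞) n T + ε := by
  have h : entN (edist : X → X → ℝ≥0∞) n T < entN (edist : X → X → ℝ≥0∞) n T + ε :=
    ENNReal.lt_add_right hfin hε
  conv_lhs at h => rw [entN]
  obtain ⟨S, hS⟩ := iInf_lt_iff.mp h
  obtain ⟨hcard, hS⟩ := iInf_lt_iff.mp hS
  have hbound : ∀ w ∈ T, (⨅ y ∈ S, edist w y) ≤ entN (edist : X → X → ℝ≥0∞) n T + ε :=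
    fun w hw => le_of_lt (lt_of_le_of_lt (le_iSup₂ (f := fun x (_ : x ∈ T) => ⨅ y ∈ S, edist x y) w hw) hS)
  refine ⟨S, ?_, hcard, hbound⟩
  rcases S.eq_empty_or_nonempty with rfl | hne
  · exfalso
    obtain ⟨x, hx⟩ := hT
    have h2 := hbound x hx
    simp only [Finset.notMem_empty, iInf_false, iInf_top, top_le_iff] at h2
    exact (ENNReal.add_ne_top.mpr ⟨hfin, hε'⟩) h2
  · exact hne

end Aux

section ENN

lemma dudley_two_rpow {p : ℝ} (hp : 0 ≤ p) (a b : ℝ≥0∞) :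
    (a + b) ^ p ≤ (2:ℝ≥0∞) ^ p * (a ^ p + b ^ p) := by
  have h : a + b ≤ 2 * max a b := by
    rw [two_mul]; exact add_le_add (le_max_left a b) (le_max_right a b)
  calc (a + b) ^ p ≤ (2 * max a b) ^ p := ENNReal.rpow_le_rpow h hp
    _ = 2 ^ p * (max a b) ^ p := ENNReal.mul_rpow_of_nonneg _ _ hp
    _ ≤ 2 ^ p * (a ^ p + b ^ p) := by
        apply mul_le_mul_right
        rcases max_cases a b with ⟨h1, _⟩ | ⟨h1, _⟩ <;> rw [h1]
        · exact le_self_add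
        · exact le_add_self

lemma dudley_geo : ∑' m : ℕ, (2:ℝ≥0∞) ^ (-(m:ℝ)) = 2 := by
  have h : ∀ m : ℕ, (2:ℝ≥0∞) ^ (-(m:ℝ)) = 2⁻¹ ^ m := by
    intro m
    rw [ENNReal.rpow_neg, ENNReal.rpow_natCast, ENNReal.inv_pow]
  rw [tsum_congr h, ENNReal.tsum_geometric, ENNReal.one_sub_inv_two, inv_inv]

lemma dudley_sum_bound (α p : ℝ) (hα : 0 < α) (hp : 1 ≤ p) (E : ℕ → ℝ≥0∞) (ε0 : ℝ≥0∞) :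
    ∑' n : ℕ, ((2:ℝ≥0∞) ^ ((n:ℝ)/α) *
        (2 * (E (n-1) + ε0 * (2:ℝ≥0∞) ^ (-((n-1 : ℕ):ℝ)) * (2:ℝ≥0∞) ^ (-((n-1 : ℕ):ℝ)/α)))) ^ p ≤
      (8 * (2:ℝ≥0∞) ^ ((1:ℝ)/α)) ^ p * (∑' n : ℕ, ((2:ℝ≥0∞) ^ ((n:ℝ)/α) * E n) ^ p)
        + ((12 * (2:ℝ≥0∞) ^ ((1:ℝ)/α)) * ε0) ^ p := by
  have hp0 : (0:ℝ) < p := lt_of_lt_of_le one_pos hp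
  set c : ℝ≥0∞ := (2:ℝ≥0∞) ^ ((1:ℝ)/α) with hc
  have hc1 : 1 ≤ c := by
    rw [hc, show (1:ℝ≥0∞) = (2:ℝ≥0∞) ^ (0:ℝ) by simp]
    exact ENNReal.rpow_le_rpow_of_exponent_le one_le_two (by positivity)
  have h2p : (2:ℝ≥0∞) ≤ 2 ^ p := by
    conv_lhs => rw [← ENNReal.rpow_one 2]
    exact ENNReal.rpow_le_rpow_of_exponent_le one_le_two hp
  have h3p : (3:ℝ≥0∞) ≤ 3 ^ p := by
    conv_lhs => rw [← ENNReal.rpow_one 3]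
    exact ENNReal.rpow_le_rpow_of_exponent_le (by norm_num) hp
  have h4c : (4:ℝ≥0∞) ^ p ≤ (4*c) ^ p := by
    apply ENNReal.rpow_le_rpow _ hp0.le
    calc (4:ℝ≥0∞) = 4 * 1 := (mul_one _).symm
      _ ≤ 4 * c := mul_le_mul_right hc1 _
  set Ssum := ∑' n : ℕ, ((2:ℝ≥0∞) ^ ((n:ℝ)/α) * E n) ^ p with hS
  have hA : (4:ℝ≥0∞) ^ p + (4*c) ^ p ≤ (8*c) ^ p := by
    calc (4:ℝ≥0∞) ^ p + (4*c) ^ p ≤ (4*c) ^ p + (4*c) ^ p := add_le_add_left h4c _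
      _ = 2 * (4*c) ^ p := (two_mul _).symm
      _ ≤ 2 ^ p * (4*c) ^ p := mul_le_mul_left h2p _
      _ = (2*(4*c)) ^ p := (ENNReal.mul_rpow_of_nonneg _ _ hp0.le).symm
      _ = (8*c) ^ p := by congr 1; ring
  have hB : (4:ℝ≥0∞) ^ p + 2 * (4*c) ^ p ≤ (12*c) ^ p := by
    calc (4:ℝ≥0∞) ^ p + 2 * (4*c) ^ p ≤ (4*c) ^ p + 2 * (4*c) ^ p := add_le_add_left h4c _
      _ = 3 * (4*c) ^ p := by ring
      _ ≤ 3 ^ p * (4*c) ^ p := mul_le_mul_left h3p _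
      _ = (3*(4*c)) ^ p := (ENNReal.mul_rpow_of_nonneg _ _ hp0.le).symm
      _ = (12*c) ^ p := by congr 1; ring
  have h0 : ((2:ℝ≥0∞) ^ (((0:ℕ):ℝ)/α) *
      (2 * (E (0-1) + ε0 * (2:ℝ≥0∞) ^ (-((0-1 : ℕ):ℝ)) * (2:ℝ≥0∞) ^ (-((0-1 : ℕ):ℝ)/α)))) ^ p
      ≤ 4 ^ p * Ssum + 4 ^ p * ε0 ^ p := by
    have e0 : ((2:ℝ≥0∞) ^ (((0:ℕ):ℝ)/α) *
        (2 * (E (0-1) + ε0 * (2:ℝ≥0∞) ^ (-((0-1 : ℕ):ℝ)) * (2:ℝ≥0∞) ^ (-((0-1 : ℕ):ℝ)/α))))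
        = 2 * (E 0 + ε0) := by
      norm_num
    rw [e0]
    calc (2 * (E 0 + ε0)) ^ p = 2 ^ p * (E 0 + ε0) ^ p := ENNReal.mul_rpow_of_nonneg _ _ hp0.le
      _ ≤ 2 ^ p * (2 ^ p * ((E 0) ^ p + ε0 ^ p)) :=
          mul_le_mul_right (dudley_two_rpow hp0.le _ _) _
      _ = 4 ^ p * (E 0) ^ p + 4 ^ p * ε0 ^ p := by
          rw [← mul_assoc, ← ENNReal.mul_rpow_of_nonneg _ _ hp0.le, mul_add]
          norm_num
      _ ≤ 4 ^ p * Ssum + 4 ^ p * ε0 ^ p := by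
          apply add_le_add_left
          apply mul_le_mul_right
          have hE0 : (E 0) ^ p = ((2:ℝ≥0∞) ^ (((0:ℕ):ℝ)/α) * E 0) ^ p := by norm_num
          rw [hE0, hS]
          exact ENNReal.le_tsum 0
  have hterm : ∀ m : ℕ, ((2:ℝ≥0∞) ^ (((m+1:ℕ):ℝ)/α) *
      (2 * (E ((m+1)-1) + ε0 * (2:ℝ≥0∞) ^ (-(((m+1)-1 : ℕ):ℝ))
        * (2:ℝ≥0∞) ^ (-(((m+1)-1 : ℕ):ℝ)/α)))) ^ p
      ≤ (4*c) ^ p * (((2:ℝ≥0∞) ^ ((m:ℝ)/α) * E m) ^ p)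
        + (4*c) ^ p * (ε0 ^ p * (2:ℝ≥0∞) ^ (-(m:ℝ))) := by
    intro m
    have hm : (m+1 : ℕ) - 1 = m := Nat.succ_sub_one m
    rw [hm]
    have hsplit : (2:ℝ≥0∞) ^ (((m+1:ℕ):ℝ)/α) = c * (2:ℝ≥0∞) ^ ((m:ℝ)/α) := by
      rw [show ((m+1:ℕ):ℝ)/α = 1/α + (m:ℝ)/α by push_cast; ring,
        ENNReal.rpow_add _ _ (by norm_num) (by norm_num), hc]
    have hcancel : (2:ℝ≥0∞) ^ ((m:ℝ)/α) * (2:ℝ≥0∞) ^ (-((m:ℕ):ℝ)/α) = 1 := by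
      rw [← ENNReal.rpow_add _ _ (by norm_num) (by norm_num),
        show (m:ℝ)/α + -((m:ℕ):ℝ)/α = 0 by ring, ENNReal.rpow_zero]
    have hinner : (2:ℝ≥0∞) ^ (((m+1:ℕ):ℝ)/α)
        * (2 * (E m + ε0 * (2:ℝ≥0∞) ^ (-((m:ℕ):ℝ)) * (2:ℝ≥0∞) ^ (-((m:ℕ):ℝ)/α)))
        = (2*c) * ((2:ℝ≥0∞) ^ ((m:ℝ)/α) * E m + ε0 * (2:ℝ≥0∞) ^ (-(m:ℝ))) := by
      rw [hsplit]
      calc c * (2:ℝ≥0∞) ^ ((m:ℝ)/α)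
          * (2 * (E m + ε0 * (2:ℝ≥0∞) ^ (-((m:ℕ):ℝ)) * (2:ℝ≥0∞) ^ (-((m:ℕ):ℝ)/α)))
          = (2*c) * ((2:ℝ≥0∞) ^ ((m:ℝ)/α) * E m
            + ε0 * (2:ℝ≥0∞) ^ (-((m:ℕ):ℝ))
              * ((2:ℝ≥0∞) ^ ((m:ℝ)/α) * (2:ℝ≥0∞) ^ (-((m:ℕ):ℝ)/α))) := by ring
        _ = _ := by rw [hcancel, mul_one]
    rw [hinner]
    calc ((2*c) * ((2:ℝ≥0∞) ^ ((m:ℝ)/α) * E m + ε0 * (2:ℝ≥0∞) ^ (-(m:ℝ)))) ^ p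
        = (2*c) ^ p * ((2:ℝ≥0∞) ^ ((m:ℝ)/α) * E m + ε0 * (2:ℝ≥0∞) ^ (-(m:ℝ))) ^ p :=
          ENNReal.mul_rpow_of_nonneg _ _ hp0.le
      _ ≤ (2*c) ^ p * (2 ^ p * (((2:ℝ≥0∞) ^ ((m:ℝ)/α) * E m) ^ p
            + (ε0 * (2:ℝ≥0∞) ^ (-(m:ℝ))) ^ p)) :=
          mul_le_mul_right (dudley_two_rpow hp0.le _ _) _
      _ = (4*c) ^ p * (((2:ℝ≥0∞) ^ ((m:ℝ)/α) * E m) ^ p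
            + (ε0 * (2:ℝ≥0∞) ^ (-(m:ℝ))) ^ p) := by
          rw [← mul_assoc, ← ENNReal.mul_rpow_of_nonneg _ _ hp0.le]
          congr 2
          ring
      _ = (4*c) ^ p * (((2:ℝ≥0∞) ^ ((m:ℝ)/α) * E m) ^ p)
            + (4*c) ^ p * ((ε0 * (2:ℝ≥0∞) ^ (-(m:ℝ))) ^ p) := mul_add _ _ _
      _ ≤ (4*c) ^ p * (((2:ℝ≥0∞) ^ ((m:ℝ)/α) * E m) ^ p)
            + (4*c) ^ p * (ε0 ^ p * (2:ℝ≥0∞) ^ (-(m:ℝ))) := by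
          apply add_le_add_right
          apply mul_le_mul_right
          rw [ENNReal.mul_rpow_of_nonneg _ _ hp0.le]
          apply mul_le_mul_right
          rw [← ENNReal.rpow_mul]
          apply ENNReal.rpow_le_rpow_of_exponent_le one_le_two
          nlinarith [mul_nonneg (Nat.cast_nonneg (α := ℝ) m) (sub_nonneg.mpr hp)]
  rw [tsum_eq_zero_add' ENNReal.summable]
  calc _ ≤ (4 ^ p * Ssum + 4 ^ p * ε0 ^ p)
        + ((4*c) ^ p * Ssum + (4*c) ^ p * (ε0 ^ p * 2)) := by
        refine add_le_add h0 ?_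
        calc (∑' m : ℕ, ((2:ℝ≥0∞) ^ (((m+1:ℕ):ℝ)/α) *
            (2 * (E ((m+1)-1) + ε0 * (2:ℝ≥0∞) ^ (-(((m+1)-1 : ℕ):ℝ))
              * (2:ℝ≥0∞) ^ (-(((m+1)-1 : ℕ):ℝ)/α)))) ^ p)
            ≤ ∑' m : ℕ, ((4*c) ^ p * (((2:ℝ≥0∞) ^ ((m:ℝ)/α) * E m) ^ p)
              + (4*c) ^ p * (ε0 ^ p * (2:ℝ≥0∞) ^ (-(m:ℝ)))) :=
            ENNReal.tsum_le_tsum hterm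
          _ = (4*c) ^ p * Ssum
              + (4*c) ^ p * (ε0 ^ p * ∑' m : ℕ, (2:ℝ≥0∞) ^ (-(m:ℝ))) := by
              rw [ENNReal.tsum_add, ENNReal.tsum_mul_left, ENNReal.tsum_mul_left,
                ENNReal.tsum_mul_left, hS]
          _ = (4*c) ^ p * Ssum + (4*c) ^ p * (ε0 ^ p * 2) := by rw [dudley_geo]
    _ = (4 ^ p + (4*c) ^ p) * Ssum + (4 ^ p + 2 * (4*c) ^ p) * ε0 ^ p := by ring
    _ ≤ (8*c) ^ p * Ssum + (12*c) ^ p * ε0 ^ p :=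
        add_le_add (mul_le_mul_left hA _) (mul_le_mul_left hB _)
    _ = (8*c) ^ p * Ssum + ((12*c) * ε0) ^ p := by
        rw [ENNReal.mul_rpow_of_nonneg (12*c) ε0 hp0.le]

end ENN


/-- **Dudley-type inequality** (Lemma 4.3): `γ_{α,p}(T) ≤ C [Σ_n (2^{n/α} e_n(T))^p]^{1/p}`
with `C` depending only on `α`. -/
theorem dudley_inequality (α : ℝ) (hα : 0 < α) :
    ∃ C : ℝ≥0∞, 0 < C ∧ C ≠ ∞ ∧
      ∀ (X : Type u) [MetricSpace X] (T : Set X) (p : ℝ), 1 ≤ p →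
        gammaF (edist : X → X → ℝ≥0∞) α p T ≤
          C * (∑' n : ℕ,
            ((2 : ℝ≥0∞) ^ ((n : ℝ) / α) * entN (edist : X → X → ℝ≥0∞) n T) ^ p) ^ p⁻¹ := by
  have hc0 : ((2:ℝ≥0∞) ^ ((1:ℝ)/α)) ≠ 0 := (ENNReal.rpow_pos two_pos (by norm_num)).ne'
  have hctop : ((2:ℝ≥0∞) ^ ((1:ℝ)/α)) ≠ ∞ :=
    ENNReal.rpow_ne_top_of_nonneg (by positivity) (by norm_num)
  refine ⟨8 * (2:ℝ≥0∞) ^ ((1:ℝ)/α), ENNReal.mul_pos (by norm_num) hc0,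
    ENNReal.mul_ne_top (by norm_num) hctop, ?_⟩
  intro X _ T p hp
  have hp0 : (0:ℝ) < p := lt_of_lt_of_le one_pos hp
  have hpinv0 : (0:ℝ) ≤ p⁻¹ := inv_nonneg.mpr hp0.le
  rcases T.eq_empty_or_nonempty with rfl | hne
  · -- empty case
    let P : Admissible (∅ : Set X) :=
      { piece := fun _ _ => (∅ : Set X)
        self_mem := fun n x hx => absurd hx (Set.notMem_empty x)
        subset_base := fun n x hx => absurd hx (Set.notMem_empty x)
        partition := fun n x hx => absurd hx (Set.notMem_empty x)
        finite_pieces := fun n => Set.Finite.subset Set.finite_empty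
          (by rintro A ⟨x, hx, -⟩; exact absurd hx (Set.notMem_empty x))
        card_pieces := fun n => by
          have he : {A : Set X | ∃ x ∈ (∅ : Set X), (∅ : Set X) = A} = ∅ := by
            ext A; simp
          rw [he, Set.ncard_empty]
          exact pow_pos two_pos _
        nested := fun n x hx => absurd hx (Set.notMem_empty x) }
    refine le_trans (iInf_le _ P) ?_
    have h0 : (⨆ x ∈ (∅ : Set X), ∑' n : ℕ,
        ((2:ℝ≥0∞) ^ ((n:ℝ)/α) * eDiam edist (P.piece n x)) ^ p) = 0 := by simp
    rw [h0, ENNReal.zero_rpow_of_pos (inv_pos.mpr hp0)]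
    exact zero_le
  by_cases htop : ∀ n : ℕ, entN (edist : X → X → ℝ≥0∞) n T ≠ ∞
  swap
  · push_neg at htop
    obtain ⟨n, hn⟩ := htop
    have hterm : ((2:ℝ≥0∞) ^ ((n:ℝ)/α) * entN (edist : X → X → ℝ≥0∞) n T) ^ p = ∞ := by
      rw [hn, ENNReal.mul_top (ENNReal.rpow_pos two_pos (by norm_num)).ne',
        ENNReal.top_rpow_of_pos hp0]
    have hsum : (∑' n : ℕ, ((2:ℝ≥0∞) ^ ((n:ℝ)/α) * entN (edist : X → X → ℝ≥0∞) n T) ^ p) = ∞ :=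
      top_le_iff.mp (hterm ▸ ENNReal.le_tsum n)
    rw [hsum, ENNReal.top_rpow_of_pos (inv_pos.mpr hp0),
      ENNReal.mul_top (ENNReal.mul_pos (by norm_num) hc0).ne']
    exact le_top
  apply ENNReal.le_of_forall_pos_le_add
  intro δ hδ hlt
  set ε0 : ℝ≥0∞ := (δ : ℝ≥0∞) / (12 * (2:ℝ≥0∞) ^ ((1:ℝ)/α)) with hε0
  have h120 : (12 * (2:ℝ≥0∞) ^ ((1:ℝ)/α)) ≠ 0 := (ENNReal.mul_pos (by norm_num) hc0).ne'
  have h12top : (12 * (2:ℝ≥0∞) ^ ((1:ℝ)/α)) ≠ ∞ := ENNReal.mul_ne_top (by norm_num) hctop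
  have hε00 : ε0 ≠ 0 := by
    rw [hε0]
    exact (ENNReal.div_pos (by exact_mod_cast hδ.ne') h12top).ne'
  have hε0top : ε0 ≠ ∞ := by
    rw [hε0]
    exact (ENNReal.div_lt_top ENNReal.coe_ne_top h120).ne
  have h2ne0 : ∀ y : ℝ, ((2:ℝ≥0∞) ^ y) ≠ 0 := fun y =>
    (ENNReal.rpow_pos two_pos (by norm_num)).ne'
  have h2netop : ∀ y : ℝ, ((2:ℝ≥0∞) ^ y) ≠ ∞ := by
    intro y h
    rw [ENNReal.rpow_eq_top_iff] at h
    rcases h with ⟨h, -⟩ | ⟨h, -⟩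
    · exact two_ne_zero h
    · exact ENNReal.ofNat_ne_top h
  have hεm0 : ∀ m : ℕ, (ε0 * (2:ℝ≥0∞) ^ (-(m:ℝ)) * (2:ℝ≥0∞) ^ (-(m:ℝ)/α)) ≠ 0 :=
    fun m => mul_ne_zero (mul_ne_zero hε00 (h2ne0 _)) (h2ne0 _)
  have hεmtop : ∀ m : ℕ, (ε0 * (2:ℝ≥0∞) ^ (-(m:ℝ)) * (2:ℝ≥0∞) ^ (-(m:ℝ)/α)) ≠ ∞ :=
    fun m => ENNReal.mul_ne_top (ENNReal.mul_ne_top hε0top (h2netop _)) (h2netop _)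
  choose S hSne hScard hSbound using fun n =>
    dudley_exists_net T hne n (hεm0 n) (hεmtop n) (htop n)
  have h1 : (S 0).card ≤ 1 := by
    have h := hScard 0
    norm_num at h
    omega
  have hD : ∀ k, ∀ w ∈ T, edist w (dudleyNear (S k) (hSne k) w) ≤
      (fun k : ℕ => entN (edist : X → X → ℝ≥0∞) k T
        + ε0 * (2:ℝ≥0∞) ^ (-(k:ℝ)) * (2:ℝ≥0∞) ^ (-(k:ℝ)/α)) k := by
    intro k w hw
    exact le_trans (le_iInf₂ fun y hy => dudleyNear_min (S k) (hSne k) w y hy) (hSbound k w hw)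
  refine le_trans (iInf_le _ (dudleyAdm T S hSne hScard)) ?_
  have hsup : (⨆ x ∈ T, ∑' n : ℕ,
      ((2:ℝ≥0∞) ^ ((n:ℝ)/α) * eDiam edist ((dudleyAdm T S hSne hScard).piece n x)) ^ p)
      ≤ ∑' n : ℕ, ((2:ℝ≥0∞) ^ ((n:ℝ)/α) *
        (2 * (entN (edist : X → X → ℝ≥0∞) (n-1) T
          + ε0 * (2:ℝ≥0∞) ^ (-((n-1 : ℕ):ℝ)) * (2:ℝ≥0∞) ^ (-((n-1 : ℕ):ℝ)/α)))) ^ p := by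
    refine iSup₂_le fun x hx => ENNReal.tsum_le_tsum fun n => ?_
    refine ENNReal.rpow_le_rpow (mul_le_mul_right ?_ _) hp0.le
    exact dudley_eDiam_piece T S hSne h1 _ hD n x
  have hkey := dudley_sum_bound α p hα hp (fun n => entN (edist : X → X → ℝ≥0∞) n T) ε0
  refine le_trans (ENNReal.rpow_le_rpow (le_trans hsup hkey) hpinv0) ?_
  have hpinv1 : p⁻¹ ≤ 1 := inv_le_one_of_one_le₀ hp
  calc ((8 * (2:ℝ≥0∞) ^ ((1:ℝ)/α)) ^ p * (∑' n : ℕ,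
        ((2:ℝ≥0∞) ^ ((n:ℝ)/α) * entN (edist : X → X → ℝ≥0∞) n T) ^ p)
        + ((12 * (2:ℝ≥0∞) ^ ((1:ℝ)/α)) * ε0) ^ p) ^ p⁻¹
      ≤ ((8 * (2:ℝ≥0∞) ^ ((1:ℝ)/α)) ^ p * (∑' n : ℕ,
          ((2:ℝ≥0∞) ^ ((n:ℝ)/α) * entN (edist : X → X → ℝ≥0∞) n T) ^ p)) ^ p⁻¹
        + (((12 * (2:ℝ≥0∞) ^ ((1:ℝ)/α)) * ε0) ^ p) ^ p⁻¹ :=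
        ENNReal.rpow_add_le_add_rpow _ _ hpinv0 hpinv1
    _ = (8 * (2:ℝ≥0∞) ^ ((1:ℝ)/α)) * (∑' n : ℕ,
          ((2:ℝ≥0∞) ^ ((n:ℝ)/α) * entN (edist : X → X → ℝ≥0∞) n T) ^ p) ^ p⁻¹
        + (12 * (2:ℝ≥0∞) ^ ((1:ℝ)/α)) * ε0 := by
        rw [ENNReal.mul_rpow_of_nonneg _ _ hpinv0, ← ENNReal.rpow_mul, ← ENNReal.rpow_mul,
          mul_inv_cancel₀ hp0.ne', ENNReal.rpow_one, ENNReal.rpow_one]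
    _ = (8 * (2:ℝ≥0∞) ^ ((1:ℝ)/α)) * (∑' n : ℕ,
          ((2:ℝ≥0∞) ^ ((n:ℝ)/α) * entN (edist : X → X → ℝ≥0∞) n T) ^ p) ^ p⁻¹ + δ := by
        rw [hε0, ENNReal.mul_div_cancel h120 h12top]
end
end

section
/- (Local form of Dudley's inequality.) Let (X,d) be a metric space, T ⊆ X, α > 0 and p ≥ 1. There exist constants C > 0 and a > 0 depending only on α such that γ_{α,p}(T) ≤ C · [ sup_{x∈T} Σ_{n≥0} (2^{n/α} e_n^{a,x}(T))^p ]^{1/p}, where e_n^{a,x}(T) := sup{ r ≥ 0 : e_n(T ∩ B(x, r/a)) > r } is the local entropy number and B(x,s) := {y ∈ X : d(x,y) ≤ s}. -/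
open scoped ENNReal NNReal
open EMetric Set

noncomputable section

universe u

/-- The local entropy number `e_n^{a,x}(T) = sup{ r ≥ 0 : e_n(T ∩ B(x, r/a)) > r }`. -/
def locEnt {X : Type u} [MetricSpace X] (n : ℕ) (a : ℝ≥0) (x : X) (T : Set X) : ℝ≥0∞ :=
  sSup {r : ℝ≥0∞ | r < entN (edist : X → X → ℝ≥0∞) n (T ∩ EMetric.closedBall x (r / a))}


set_option linter.unusedSectionVars false
set_option linter.unusedVariables false

namespace LocDudley

variable {X : Type u} [MetricSpace X]

lemma edist_le_eDiam {A : Set X} {z w : X} (hz : z ∈ A) (hw : w ∈ A) :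
    edist z w ≤ eDiam (edist : X → X → ℝ≥0∞) A :=
  le_iSup₂_of_le z hz (le_iSup₂_of_le w hw le_rfl)

lemma eDiam_le {D : X → X → ℝ≥0∞} {A : Set X} {c : ℝ≥0∞}
    (h : ∀ z ∈ A, ∀ w ∈ A, D z w ≤ c) : eDiam D A ≤ c :=
  iSup₂_le fun z hz => iSup₂_le fun w hw => h z hz w hw

lemma entN_mono {D : X → X → ℝ≥0∞} {n : ℕ} {A B : Set X} (h : A ⊆ B) :
    entN D n A ≤ entN D n B :=
  iInf_mono fun S => iInf_mono fun _ => iSup_le fun z => iSup_le fun hz =>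
    le_iSup₂_of_le z (h hz) le_rfl

/-- Key property (E): for `r` above the local entropy number, the trace of `T`
on the ball of radius `r/a` has `n`-th entropy number at most `r`. -/
lemma entN_le_of_locEnt_lt {n : ℕ} {a : ℝ≥0} {x : X} {T : Set X} {r : ℝ≥0∞}
    (h : locEnt n a x T < r) :
    entN (edist : X → X → ℝ≥0∞) n (T ∩ EMetric.closedBall x (r / a)) ≤ r := by
  by_contra hc
  exact absurd (le_sSup (by simpa using lt_of_not_ge hc)) (not_le_of_gt h)

/-- Two-point lower bound on `entN` at level 0 fails to beat half the distance. -/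
lemma half_edist_le_entN_zero {A : Set X} {x y : X} (hx : x ∈ A) (hy : y ∈ A) :
    edist x y / 2 ≤ entN (edist : X → X → ℝ≥0∞) 0 A := by
  refine le_iInf₂ fun S hS => ?_
  have hS1 : S.card ≤ 1 := by simpa using Nat.lt_succ_iff.mp (by simpa using hS)
  rcases S.eq_empty_or_nonempty with rfl | ⟨w, hwS⟩
  · refine le_trans ?_ (le_iSup₂_of_le x hx le_rfl)
    simp
  · have hSw : S = {w} :=
      Finset.eq_singleton_iff_unique_mem.mpr
        ⟨hwS, fun b hb => Finset.card_le_one_iff.mp hS1 hb hwS⟩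
    subst hSw
    have htri : edist x y ≤ edist x w + edist y w :=
      (edist_triangle x w y).trans (by rw [edist_comm w y])
    rcases le_total (edist x w) (edist y w) with hle | hle
    · refine le_trans ?_ (le_iSup₂_of_le y hy le_rfl)
      have hinf : (⨅ z ∈ ({w} : Finset X), edist y z) = edist y w := by simp
      rw [hinf, ENNReal.div_le_iff_le_mul (Or.inl two_ne_zero) (Or.inl ENNReal.ofNat_ne_top)]
      calc edist x y ≤ edist y w + edist y w := htri.trans (by gcongr)
      _ = edist y w * 2 := by ring
    · refine le_trans ?_ (le_iSup₂_of_le x hx le_rfl)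
      have hinf : (⨅ z ∈ ({w} : Finset X), edist x z) = edist x w := by simp
      rw [hinf, ENNReal.div_le_iff_le_mul (Or.inl two_ne_zero) (Or.inl ENNReal.ofNat_ne_top)]
      calc edist x y ≤ edist x w + edist x w := htri.trans (by gcongr)
      _ = edist x w * 2 := by ring

/-- Global diameter bound: every point `y` of `T` is within `ℓ₀(x)/a` of `x`. -/
lemma mul_edist_le_locEnt {a : ℝ≥0} (ha0 : a ≠ 0) (ha : (a : ℝ≥0∞) < 1 / 2)
    {T : Set X} {x y : X} (hx : x ∈ T) (hy : y ∈ T) :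
    (a : ℝ≥0∞) * edist x y ≤ locEnt 0 a x T := by
  rcases eq_or_ne (edist x y) 0 with h0 | h0
  · simp [h0]
  refine le_sSup ?_
  have hfin : edist x y ≠ ∞ := edist_ne_top x y
  have hdiv : (a : ℝ≥0∞) * edist x y / a = edist x y := by
    rw [mul_comm, mul_div_assoc, ENNReal.div_self (by exact_mod_cast ha0) ENNReal.coe_ne_top,
      mul_one]
  show (a : ℝ≥0∞) * edist x y
      < entN (edist : X → X → ℝ≥0∞) 0 (T ∩ EMetric.closedBall x ((a : ℝ≥0∞) * edist x y / a))
  rw [hdiv]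
  have hxm : x ∈ T ∩ EMetric.closedBall x (edist x y) := ⟨hx, EMetric.mem_closedBall_self⟩
  have hym : y ∈ T ∩ EMetric.closedBall x (edist x y) := ⟨hy, EMetric.mem_closedBall.mpr (edist_comm y x).le⟩
  calc (a : ℝ≥0∞) * edist x y < (1 / 2) * edist x y := by
        exact ENNReal.mul_lt_mul_left h0 hfin ha
    _ = edist x y / 2 := by rw [one_div, div_eq_mul_inv, mul_comm]
    _ ≤ _ := half_edist_le_entN_zero hxm hym

lemma eDiam_base_le {a : ℝ≥0} (ha0 : a ≠ 0) (ha : (a : ℝ≥0∞) < 1 / 2)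
    {T : Set X} {x : X} (hx : x ∈ T) :
    eDiam (edist : X → X → ℝ≥0∞) T ≤ 2 * locEnt 0 a x T / a := by
  refine eDiam_le fun z hz w hw => ?_
  have h1 : edist z x ≤ locEnt 0 a x T / a := by
    rw [ENNReal.le_div_iff_mul_le (Or.inl (by exact_mod_cast ha0)) (Or.inl ENNReal.coe_ne_top)]
    rw [mul_comm, edist_comm]
    exact mul_edist_le_locEnt ha0 ha hx hz
  have h2 : edist x w ≤ locEnt 0 a x T / a := by
    rw [ENNReal.le_div_iff_mul_le (Or.inl (by exact_mod_cast ha0)) (Or.inl ENNReal.coe_ne_top)]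
    rw [mul_comm]
    exact mul_edist_le_locEnt ha0 ha hx hw
  calc edist z w ≤ edist z x + edist x w := edist_triangle _ _ _
    _ ≤ locEnt 0 a x T / a + locEnt 0 a x T / a := add_le_add h1 h2
    _ = 2 * locEnt 0 a x T / a := by rw [ENNReal.div_add_div_same, two_mul]

end LocDudley

section
variable {γ ι : Type*}

lemma ncard_biUnion_le_aux {s : Set ι} (hs : s.Finite) (f : ι → Set γ) (k : ℕ) :
    (∀ i ∈ s, (f i).Finite) → (∀ i ∈ s, (f i).ncard ≤ k) →
      (⋃ i ∈ s, f i).Finite ∧ (⋃ i ∈ s, f i).ncard ≤ s.ncard * k := by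
  refine Set.Finite.induction_on
    (motive := fun s _ => (∀ i ∈ s, (f i).Finite) → (∀ i ∈ s, (f i).ncard ≤ k) →
      (⋃ i ∈ s, f i).Finite ∧ (⋃ i ∈ s, f i).ncard ≤ s.ncard * k) s hs (by intro _ _; simp) ?_
  intro a t ha ht ih hf hk
  have h1 : (⋃ i ∈ insert a t, f i) = f a ∪ ⋃ i ∈ t, f i := by
    simp [Set.biUnion_insert]
  obtain ⟨ihfin, ihcard⟩ := ih (fun i hi => hf i (Set.mem_insert_of_mem a hi))
    (fun i hi => hk i (Set.mem_insert_of_mem a hi))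
  constructor
  · rw [h1]
    exact (hf a (Set.mem_insert a t)).union ihfin
  · rw [h1, Set.ncard_insert_of_notMem ha ht, add_mul, one_mul]
    calc (f a ∪ ⋃ i ∈ t, f i).ncard ≤ (f a).ncard + (⋃ i ∈ t, f i).ncard :=
          Set.ncard_union_le _ _
      _ ≤ k + t.ncard * k := add_le_add (hk a (Set.mem_insert a t)) ihcard
      _ = t.ncard * k + k := by ring

end

namespace LocDudley

variable {X : Type u} [MetricSpace X] [Nonempty X]

variable (T : Set X) (a : ℝ≥0) (ε : ℕ → ℝ≥0∞)

open scoped Classical in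
def ctr (n : ℕ) (A : Set X) : X :=
  if h : ∃ y, y ∈ A ∧ locEnt n a y T ≤ (⨅ z ∈ A, locEnt n a z T) + ε n then h.choose
  else Classical.arbitrary X

variable {T a ε}

lemma ctr_spec {n : ℕ} {A : Set X} (hε : ε n ≠ 0) (hA : A.Nonempty) :
    ctr T a ε n A ∈ A ∧
      locEnt n a (ctr T a ε n A) T ≤ (⨅ z ∈ A, locEnt n a z T) + ε n := by
  have h : ∃ y, y ∈ A ∧ locEnt n a y T ≤ (⨅ z ∈ A, locEnt n a z T) + ε n := by
    by_cases hI : (⨅ z ∈ A, locEnt n a z T) = ∞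
    · obtain ⟨y, hy⟩ := hA
      exact ⟨y, hy, by simp [hI]⟩
    · have hlt : (⨅ z ∈ A, locEnt n a z T) < (⨅ z ∈ A, locEnt n a z T) + ε n :=
        ENNReal.lt_add_right hI hε
      rw [iInf_lt_iff] at hlt
      obtain ⟨z, hz⟩ := hlt
      rw [iInf_lt_iff] at hz
      obtain ⟨hzA, hzlt⟩ := hz
      exact ⟨z, hzA, hzlt.le⟩
  rw [ctr, dif_pos h]
  exact h.choose_spec

variable (T a ε)

/-- The "radius" used to refine the piece `A` at step `n`. -/
def rad (n : ℕ) (A : Set X) : ℝ≥0∞ :=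
  max ((a : ℝ≥0∞) * eDiam (edist : X → X → ℝ≥0∞) A) (locEnt n a (ctr T a ε n A) T) + ε n

open scoped Classical in
def net (n : ℕ) (A : Set X) : Finset X :=
  if h : ∃ S : Finset X, S.card < 2 ^ 2 ^ n ∧
      ∀ z ∈ A, ∃ w ∈ S, edist z w < rad T a ε n A + ε n then h.choose else ∅

variable {T a ε}

lemma net_card {n : ℕ} {A : Set X} : (net T a ε n A).card < 2 ^ 2 ^ n := by
  rw [net]
  split_ifs with h
  · exact h.choose_spec.1
  · simpa using Nat.pos_pow_of_pos _ (by norm_num)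

lemma net_spec {n : ℕ} {A : Set X} (ha0 : a ≠ 0) (hε0 : ε n ≠ 0) (hεt : ε n ≠ ∞)
    (hA : A.Nonempty) (hAT : A ⊆ T) (hrad : rad T a ε n A ≠ ∞) :
    ∀ z ∈ A, ∃ w ∈ net T a ε n A, edist z w < rad T a ε n A + ε n := by
  obtain ⟨hyA, -⟩ := ctr_spec (a := a) (T := T) hε0 hA
  set y := ctr T a ε n A with hy
  set M := max ((a : ℝ≥0∞) * eDiam (edist : X → X → ℝ≥0∞) A) (locEnt n a y T) with hM
  have hMrad : M ≤ rad T a ε n A := le_self_add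
  have hMt : M ≠ ∞ := fun h => hrad (eq_top_iff.mpr (h ▸ hMrad))
  have hlt : locEnt n a y T < rad T a ε n A :=
    lt_of_le_of_lt (le_max_right _ _) (lt_of_le_of_lt le_rfl
      (lt_of_lt_of_le (ENNReal.lt_add_right hMt hε0) le_rfl))
  have hE := entN_le_of_locEnt_lt hlt
  have hsub : A ⊆ T ∩ EMetric.closedBall y (rad T a ε n A / a) := by
    intro z hz
    refine ⟨hAT hz, ?_⟩
    have h1 : edist z y ≤ eDiam (edist : X → X → ℝ≥0∞) A := edist_le_eDiam hz hyA
    have h2 : eDiam (edist : X → X → ℝ≥0∞) A ≤ rad T a ε n A / a := by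
      rw [ENNReal.le_div_iff_mul_le (Or.inl (by exact_mod_cast ha0)) (Or.inl ENNReal.coe_ne_top)]
      rw [mul_comm]
      exact le_trans (le_max_left _ _) hMrad
    exact mem_closedBall.mpr (h1.trans h2)
  have h3 : entN (edist : X → X → ℝ≥0∞) n A < rad T a ε n A + ε n :=
    lt_of_le_of_lt ((entN_mono hsub).trans hE) (ENNReal.lt_add_right hrad hε0)
  rw [entN, iInf_lt_iff] at h3
  obtain ⟨S, h3⟩ := h3
  rw [iInf_lt_iff] at h3
  obtain ⟨hcard, h3⟩ := h3
  have hex : ∃ S : Finset X, S.card < 2 ^ 2 ^ n ∧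
      ∀ z ∈ A, ∃ w ∈ S, edist z w < rad T a ε n A + ε n := by
    refine ⟨S, hcard, fun z hz => ?_⟩
    have h4 : (⨅ w ∈ S, edist z w) < rad T a ε n A + ε n :=
      lt_of_le_of_lt (le_iSup₂_of_le z hz le_rfl) h3
    rw [iInf_lt_iff] at h4
    obtain ⟨w, h4⟩ := h4
    rw [iInf_lt_iff] at h4
    obtain ⟨hwS, h4⟩ := h4
    exact ⟨w, hwS, h4⟩
  intro z hz
  rw [net, dif_pos hex]
  exact hex.choose_spec.2 z hz

variable (T a ε)

open scoped Classical in
def sel (n : ℕ) (A : Set X) (z : X) : X :=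
  if h : ∃ w, w ∈ net T a ε n A ∧ edist z w < rad T a ε n A + ε n then h.choose
  else ctr T a ε n A

variable {T a ε}

lemma sel_mem {n : ℕ} {A : Set X} {z : X} :
    sel T a ε n A z ∈ insert (ctr T a ε n A) ((net T a ε n A : Finset X) : Set X) := by
  rw [sel]
  split_ifs with h
  · exact Set.mem_insert_of_mem _ h.choose_spec.1
  · exact Set.mem_insert _ _

lemma sel_spec {n : ℕ} {A : Set X} {z : X} (ha0 : a ≠ 0) (hε0 : ε n ≠ 0) (hεt : ε n ≠ ∞)
    (hA : A.Nonempty) (hAT : A ⊆ T) (hrad : rad T a ε n A ≠ ∞) (hz : z ∈ A) :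
    edist z (sel T a ε n A z) < rad T a ε n A + ε n := by
  obtain ⟨w, hw, hd⟩ := net_spec ha0 hε0 hεt hA hAT hrad z hz
  have hex : ∃ w, w ∈ net T a ε n A ∧ edist z w < rad T a ε n A + ε n := ⟨w, hw, hd⟩
  rw [sel, dif_pos hex]
  exact hex.choose_spec.2

variable (T a ε)

/-- The pieces of the admissible partitions. -/
def F : ℕ → X → Set X
  | 0, _ => T
  | n + 1, x =>
      {z ∈ F n x | sel T a ε n (F n x) z = sel T a ε n (F n x) x}

variable {T a ε}

lemma F_zero {x : X} : F T a ε 0 x = T := rfl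

lemma F_succ {n : ℕ} {x : X} :
    F T a ε (n + 1) x
      = {z ∈ F T a ε n x | sel T a ε n (F T a ε n x) z = sel T a ε n (F T a ε n x) x} := rfl

lemma F_succ_subset {n : ℕ} {x : X} : F T a ε (n + 1) x ⊆ F T a ε n x := by
  rw [F_succ]; exact sep_subset _ _

lemma F_subset {n : ℕ} {x : X} : F T a ε n x ⊆ T := by
  induction n with
  | zero => rw [F_zero]
  | succ n ih => exact F_succ_subset.trans ih

lemma F_self {n : ℕ} {x : X} (hx : x ∈ T) : x ∈ F T a ε n x := by
  induction n with
  | zero => rw [F_zero]; exact hx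
  | succ n ih => rw [F_succ]; exact ⟨ih, rfl⟩

lemma F_eq {n : ℕ} : ∀ x ∈ T, ∀ y ∈ T, y ∈ F T a ε n x → F T a ε n y = F T a ε n x := by
  induction n with
  | zero => intro x hx y hy _; rfl
  | succ n ih =>
      intro x hx y hy hyF
      rw [F_succ] at hyF
      obtain ⟨hyFn, hsel⟩ := hyF
      have hEq := ih x hx y hy hyFn
      rw [F_succ, F_succ, hEq, hsel]

end LocDudley

namespace LocDudley

variable {X : Type u} [MetricSpace X] [Nonempty X] {T : Set X} {a : ℝ≥0} {ε : ℕ → ℝ≥0∞}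

lemma pieces_aux (T : Set X) (a : ℝ≥0) (ε : ℕ → ℝ≥0∞) (n : ℕ) :
    {A : Set X | ∃ x ∈ T, F T a ε n x = A}.Finite ∧
      {A : Set X | ∃ x ∈ T, F T a ε n x = A}.ncard ≤ 2 ^ 2 ^ n - 1 := by
  induction n with
  | zero =>
      have hsub : {A : Set X | ∃ x ∈ T, F T a ε 0 x = A} ⊆ {T} := by
        rintro A ⟨x, hx, rfl⟩
        simp [F_zero]
      refine ⟨(Set.finite_singleton T).subset hsub, ?_⟩
      have := (Set.ncard_le_ncard hsub (Set.finite_singleton T)).trans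
        (le_of_eq (Set.ncard_singleton T))
      simpa using this
  | succ n ih =>
      set P := {A : Set X | ∃ x ∈ T, F T a ε n x = A} with hP
      have hsub : {A : Set X | ∃ x ∈ T, F T a ε (n + 1) x = A} ⊆
          ⋃ A ∈ P, (fun w => {z ∈ A | sel T a ε n A z = w}) ''
            (insert (ctr T a ε n A) ((net T a ε n A : Finset X) : Set X)) := by
        rintro B ⟨x, hx, rfl⟩
        refine Set.mem_biUnion (show F T a ε n x ∈ P from ⟨x, hx, rfl⟩) ?_
        exact ⟨sel T a ε n (F T a ε n x) x, sel_mem, F_succ.symm⟩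
      have hfin : ∀ A ∈ P, ((fun w => {z ∈ A | sel T a ε n A z = w}) ''
          (insert (ctr T a ε n A) ((net T a ε n A : Finset X) : Set X))).Finite :=
        fun A _ => (((net T a ε n A).finite_toSet.insert _).image _)
      have hbound : ∀ A ∈ P, ((fun w => {z ∈ A | sel T a ε n A z = w}) ''
          (insert (ctr T a ε n A) ((net T a ε n A : Finset X) : Set X))).ncard ≤ 2 ^ 2 ^ n := by
        intro A _
        refine (Set.ncard_image_le ((net T a ε n A).finite_toSet.insert _)).trans ?_
        refine (Set.ncard_insert_le _ _).trans ?_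
        rw [Set.ncard_coe_finset]
        exact net_card
      obtain ⟨hufin, hucard⟩ := ncard_biUnion_le_aux ih.1 _ (2 ^ 2 ^ n) hfin hbound
      refine ⟨hufin.subset hsub, ?_⟩
      have h1 : (2 : ℕ) ^ 2 ^ (n + 1) = 2 ^ 2 ^ n * 2 ^ 2 ^ n := by
        rw [← pow_add]
        congr 1
        rw [pow_succ]
        ring
      have h2 : (1 : ℕ) ≤ 2 ^ 2 ^ n := Nat.one_le_two_pow
      calc {A : Set X | ∃ x ∈ T, F T a ε (n + 1) x = A}.ncard
          ≤ (⋃ A ∈ P, (fun w => {z ∈ A | sel T a ε n A z = w}) ''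
            (insert (ctr T a ε n A) ((net T a ε n A : Finset X) : Set X))).ncard :=
            Set.ncard_le_ncard hsub hufin
        _ ≤ P.ncard * 2 ^ 2 ^ n := hucard
        _ ≤ (2 ^ 2 ^ n - 1) * 2 ^ 2 ^ n := Nat.mul_le_mul_right _ ih.2
        _ ≤ 2 ^ 2 ^ (n + 1) - 1 := by
            rw [Nat.sub_mul, one_mul, ← h1]
            omega

/-- The admissible sequence built from local entropy nets. -/
def adm (T : Set X) (a : ℝ≥0) (ε : ℕ → ℝ≥0∞) : Admissible T where
  piece := F T a ε
  self_mem := fun _ _ hx => F_self hx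
  subset_base := fun _ _ _ => F_subset
  partition := fun _ x hx y hy h => F_eq x hx y hy h
  finite_pieces := fun n => (pieces_aux T a ε n).1
  card_pieces := fun n =>
    lt_of_le_of_lt (pieces_aux T a ε n).2 (Nat.sub_lt (Nat.pow_pos (by norm_num)) one_pos)
  nested := fun _ _ _ => F_succ_subset

/-- The key diameter recursion. -/
lemma eDiam_F_succ_le {n : ℕ} {x : X} (ha0 : a ≠ 0) (hε0 : ε n ≠ 0) (hεt : ε n ≠ ∞)
    (hx : x ∈ T) :
    eDiam (edist : X → X → ℝ≥0∞) (F T a ε (n + 1) x)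
      ≤ 2 * (a : ℝ≥0∞) * eDiam (edist : X → X → ℝ≥0∞) (F T a ε n x)
        + 2 * locEnt n a x T + 6 * ε n := by
  set A := F T a ε n x with hA
  have hxA : x ∈ A := F_self hx
  have hAT : A ⊆ T := F_subset
  obtain ⟨hcA, hcle⟩ := ctr_spec (T := T) (a := a) hε0 ⟨x, hxA⟩
  have hctr_le : locEnt n a (ctr T a ε n A) T ≤ locEnt n a x T + ε n :=
    hcle.trans (add_le_add_left (iInf₂_le x hxA) _)
  by_cases hrad : rad T a ε n A = ∞
  · rw [rad] at hrad
    have hmax : max ((a : ℝ≥0∞) * eDiam (edist : X → X → ℝ≥0∞) A)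
        (locEnt n a (ctr T a ε n A) T) = ∞ := by
      by_contra hmax
      exact (ENNReal.add_ne_top.mpr ⟨hmax, hεt⟩) hrad
    rcases max_eq_top.mp hmax with h | h
    · have : 2 * (a : ℝ≥0∞) * eDiam (edist : X → X → ℝ≥0∞) A = ∞ := by
        rw [mul_assoc, h, ENNReal.mul_top two_ne_zero]
      rw [this]
      simp
    · have hxtop : locEnt n a x T = ∞ := by
        by_contra hxtop
        exact (ENNReal.add_ne_top.mpr ⟨hxtop, hεt⟩) (eq_top_iff.mpr (h ▸ hctr_le))
      have : 2 * locEnt n a x T = ∞ := by rw [hxtop, ENNReal.mul_top two_ne_zero]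
      rw [this]
      simp
  · refine eDiam_le fun z hz w hw => ?_
    rw [F_succ] at hz hw
    obtain ⟨hzA, hzsel⟩ := hz
    obtain ⟨hwA, hwsel⟩ := hw
    have h1 := sel_spec ha0 hε0 hεt ⟨x, hxA⟩ hAT hrad hzA
    have h2 := sel_spec ha0 hε0 hεt ⟨x, hxA⟩ hAT hrad hwA
    have hzw : sel T a ε n A z = sel T a ε n A w := hzsel.trans hwsel.symm
    have hmaxle : max ((a : ℝ≥0∞) * eDiam (edist : X → X → ℝ≥0∞) A)
        (locEnt n a (ctr T a ε n A) T)
          ≤ (a : ℝ≥0∞) * eDiam (edist : X → X → ℝ≥0∞) A + locEnt n a (ctr T a ε n A) T :=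
      max_le le_self_add le_add_self
    calc edist z w ≤ edist z (sel T a ε n A z) + edist w (sel T a ε n A z) := by
          rw [edist_comm w]
          exact edist_triangle _ _ _
      _ ≤ (rad T a ε n A + ε n) + (rad T a ε n A + ε n) := by
          rw [hzw] at h1 ⊢
          exact add_le_add h1.le h2.le
      _ = 2 * rad T a ε n A + 2 * ε n := by ring
      _ ≤ 2 * ((a : ℝ≥0∞) * eDiam (edist : X → X → ℝ≥0∞) A
            + locEnt n a (ctr T a ε n A) T + ε n) + 2 * ε n := by
          gcongr
          rw [rad]
          exact add_le_add_left hmaxle _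
      _ ≤ 2 * ((a : ℝ≥0∞) * eDiam (edist : X → X → ℝ≥0∞) A
            + (locEnt n a x T + ε n) + ε n) + 2 * ε n := by gcongr
      _ = 2 * (a : ℝ≥0∞) * eDiam (edist : X → X → ℝ≥0∞) A + 2 * locEnt n a x T + 6 * ε n := by
          ring

end LocDudley

namespace LocDudley

/-- The sequence of slack parameters. -/
def epsSeq (α : ℝ) (δ : ℝ≥0∞) : ℕ → ℝ≥0∞ :=
  fun n => δ * 2⁻¹ ^ n * ((2 : ℝ≥0∞) ^ ((n : ℝ) / α))⁻¹

lemma two_rpow_ne_zero {r : ℝ} : (2 : ℝ≥0∞) ^ r ≠ 0 :=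
  (ENNReal.rpow_pos (by norm_num) ENNReal.ofNat_ne_top).ne'

lemma two_rpow_ne_top {r : ℝ} (hr : 0 ≤ r) : (2 : ℝ≥0∞) ^ r ≠ ∞ :=
  ENNReal.rpow_ne_top_of_nonneg hr ENNReal.ofNat_ne_top

lemma epsSeq_ne_zero {α : ℝ} {δ : ℝ≥0∞} (hδ0 : δ ≠ 0) (n : ℕ) : epsSeq α δ n ≠ 0 := by
  rw [epsSeq]
  refine mul_ne_zero (mul_ne_zero hδ0 ?_) ?_
  · exact pow_ne_zero _ (by simp)
  · simp [two_rpow_ne_zero]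

lemma epsSeq_ne_top {α : ℝ} {δ : ℝ≥0∞} (hδt : δ ≠ ∞) (n : ℕ) : epsSeq α δ n ≠ ∞ := by
  rw [epsSeq]
  refine ENNReal.mul_ne_top (ENNReal.mul_ne_top hδt ?_) ?_
  · exact ENNReal.pow_ne_top (by simp)
  · simp [ENNReal.inv_ne_top, two_rpow_ne_zero]

lemma epsSeq_mul {α : ℝ} (hα : 0 < α) {δ : ℝ≥0∞} (n : ℕ) :
    (2 : ℝ≥0∞) ^ ((n : ℝ) / α) * epsSeq α δ n = δ * 2⁻¹ ^ n := by
  rw [epsSeq, mul_comm, mul_assoc,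
    ENNReal.inv_mul_cancel two_rpow_ne_zero
      (two_rpow_ne_top (div_nonneg (Nat.cast_nonneg n) hα.le)), mul_one]

variable {X : Type u} [MetricSpace X] [Nonempty X]

/-- The main per-point estimate. -/
lemma sum_le_of_chain {α p : ℝ} (hα : 0 < α) (hp : 1 ≤ p) {a : ℝ≥0} (ha0 : a ≠ 0)
    (hahalf : (a : ℝ≥0∞) < 1 / 2)
    (hq : (2 : ℝ≥0∞) ^ (1 / α) * (2 * (a : ℝ≥0∞)) ≤ 2⁻¹)
    {δ : ℝ≥0∞} (hδ0 : δ ≠ 0) (hδt : δ ≠ ∞)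
    {T : Set X} {x : X} (hx : x ∈ T)
    (hL : ∀ m : ℕ, locEnt m a x T ≠ ∞) :
    ∑' n : ℕ, ((2 : ℝ≥0∞) ^ ((n : ℝ) / α) * eDiam (edist : X → X → ℝ≥0∞)
        (F T a (epsSeq α δ) n x)) ^ p
      ≤ (4 / (a : ℝ≥0∞) + 24 * (2 : ℝ≥0∞) ^ (1 / α)) ^ p
        * ((∑' m : ℕ, ((2 : ℝ≥0∞) ^ ((m : ℝ) / α) * locEnt m a x T) ^ p) + 2 * δ ^ p) := by
  have hp0 : (0 : ℝ) < p := lt_of_lt_of_le one_pos hp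
  set ε : ℕ → ℝ≥0∞ := epsSeq α δ with hε
  have hε0 : ∀ n, ε n ≠ 0 := epsSeq_ne_zero hδ0
  have hεt : ∀ n, ε n ≠ ∞ := epsSeq_ne_top hδt
  set L : ℕ → ℝ≥0∞ := fun m => locEnt m a x T with hLdef
  set D : ℕ → ℝ≥0∞ := fun n => eDiam (edist : X → X → ℝ≥0∞) (F T a ε n x) with hD
  set V : ℕ → ℝ≥0∞ := fun n => (2 : ℝ≥0∞) ^ ((n : ℝ) / α) * D n with hV
  set g : ℕ → ℝ≥0∞ := fun n => (2 : ℝ≥0∞) ^ (((n + 1 : ℕ) : ℝ) / α) * (2 * L n + 6 * ε n)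
    with hg
  set Sx : ℝ≥0∞ := ∑' m : ℕ, ((2 : ℝ≥0∞) ^ ((m : ℝ) / α) * L m) ^ p with hSx
  have hsplit : ∀ n : ℕ, (2 : ℝ≥0∞) ^ (((n + 1 : ℕ) : ℝ) / α)
      = (2 : ℝ≥0∞) ^ (1 / α) * (2 : ℝ≥0∞) ^ ((n : ℝ) / α) := by
    intro n
    rw [← ENNReal.rpow_add _ _ two_ne_zero ENNReal.ofNat_ne_top]
    congr 1
    push_cast
    ring
  -- the basic recursion for diameters
  have hDrec : ∀ n, D (n + 1) ≤ 2 * (a : ℝ≥0∞) * D n + 2 * L n + 6 * ε n :=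
    fun n => eDiam_F_succ_le ha0 (hε0 n) (hεt n) hx
  -- base diameter bound
  have hD0 : D 0 ≤ 2 / (a : ℝ≥0∞) * L 0 := by
    have h := eDiam_base_le (T := T) ha0 hahalf hx
    have h2 : D 0 = eDiam (edist : X → X → ℝ≥0∞) T := by
      simp only [hD, F_zero]
    rw [h2]
    refine h.trans (le_of_eq ?_)
    simp only [hLdef]
    rw [div_eq_mul_inv, div_eq_mul_inv]
    ring
  -- recursion for V
  have hVrec : ∀ n, V (n + 1) ≤ 2⁻¹ * V n + g n := by
    intro n
    have h1 : V (n + 1) ≤ (2 : ℝ≥0∞) ^ (((n + 1 : ℕ) : ℝ) / α)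
        * (2 * (a : ℝ≥0∞) * D n + 2 * L n + 6 * ε n) := by
      simp only [hV]
      exact mul_le_mul_right (hDrec n) _
    have h2 : (2 : ℝ≥0∞) ^ (((n + 1 : ℕ) : ℝ) / α)
        * (2 * (a : ℝ≥0∞) * D n + 2 * L n + 6 * ε n)
        = (2 : ℝ≥0∞) ^ (((n + 1 : ℕ) : ℝ) / α) * (2 * (a : ℝ≥0∞) * D n) + g n := by
      simp only [hg]
      ring
    have h3 : (2 : ℝ≥0∞) ^ (((n + 1 : ℕ) : ℝ) / α) * (2 * (a : ℝ≥0∞) * D n) ≤ 2⁻¹ * V n := by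
      rw [hsplit n]
      calc (2 : ℝ≥0∞) ^ (1 / α) * (2 : ℝ≥0∞) ^ ((n : ℝ) / α) * (2 * (a : ℝ≥0∞) * D n)
          = ((2 : ℝ≥0∞) ^ (1 / α) * (2 * (a : ℝ≥0∞)))
            * ((2 : ℝ≥0∞) ^ ((n : ℝ) / α) * D n) := by ring
        _ ≤ 2⁻¹ * ((2 : ℝ≥0∞) ^ ((n : ℝ) / α) * D n) := mul_le_mul_left hq _
        _ = 2⁻¹ * V n := by simp only [hV]
    calc V (n + 1) ≤ _ := h1.trans (le_of_eq h2)
      _ ≤ 2⁻¹ * V n + g n := add_le_add_left h3 _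
  -- finiteness
  have hDfin : ∀ n, D n ≠ ∞ := by
    intro n
    induction n with
    | zero =>
        refine ne_top_of_le_ne_top ?_ hD0
        exact ENNReal.mul_ne_top
          (ENNReal.div_lt_top ENNReal.ofNat_ne_top (by exact_mod_cast ha0)).ne (hL 0)
    | succ n ih =>
        refine ne_top_of_le_ne_top ?_ (hDrec n)
        refine ENNReal.add_ne_top.mpr ⟨ENNReal.add_ne_top.mpr ⟨?_, ?_⟩, ?_⟩
        · exact ENNReal.mul_ne_top (ENNReal.mul_ne_top ENNReal.ofNat_ne_top ENNReal.coe_ne_top) ih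
        · exact ENNReal.mul_ne_top ENNReal.ofNat_ne_top (hL n)
        · exact ENNReal.mul_ne_top (by norm_num) (hεt n)
  have hVfin : ∀ n, V n ≠ ∞ := fun n =>
    ENNReal.mul_ne_top (two_rpow_ne_top (by positivity)) (hDfin n)
  -- Jensen step
  have h2g : ∀ n, 2⁻¹ * (2 * g n) = g n := by
    intro n
    rw [← mul_assoc, ENNReal.inv_mul_cancel two_ne_zero ENNReal.ofNat_ne_top, one_mul]
  have hJen : ∀ n, (V (n + 1)) ^ p ≤ 2⁻¹ * (V n) ^ p + 2⁻¹ * (2 * g n) ^ p := by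
    intro n
    have h1 : V (n + 1) ≤ 2⁻¹ * V n + 2⁻¹ * (2 * g n) := by
      rw [h2g n]
      exact hVrec n
    exact (ENNReal.rpow_le_rpow h1 hp0.le).trans
      (ENNReal.rpow_arith_mean_le_arith_mean2_rpow 2⁻¹ 2⁻¹ (V n) (2 * g n)
        ENNReal.inv_two_add_inv_two hp)
  set G : ℝ≥0∞ := ∑' n : ℕ, (2 * g n) ^ p with hG
  -- partial sums estimate
  have hPS : ∀ N, ∑ n ∈ Finset.range N, (V n) ^ p
      ≤ ((V 0) ^ p + 2⁻¹ * G) + 2⁻¹ * ∑ n ∈ Finset.range N, (V n) ^ p := by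
    intro N
    cases N with
    | zero => simp
    | succ M =>
        have hsplitN : ∑ n ∈ Finset.range (M + 1), (V n) ^ p
            = (∑ n ∈ Finset.range M, (V (n + 1)) ^ p) + (V 0) ^ p :=
          Finset.sum_range_succ' _ _
        have h2 : ∑ n ∈ Finset.range M, (V (n + 1)) ^ p
            ≤ 2⁻¹ * ∑ n ∈ Finset.range M, (V n) ^ p
              + 2⁻¹ * ∑ n ∈ Finset.range M, (2 * g n) ^ p := by
          rw [Finset.mul_sum, Finset.mul_sum, ← Finset.sum_add_distrib]
          exact Finset.sum_le_sum fun n _ => hJen n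
        have h3 : ∑ n ∈ Finset.range M, (V n) ^ p
            ≤ ∑ n ∈ Finset.range (M + 1), (V n) ^ p :=
          Finset.sum_le_sum_of_subset (Finset.range_subset_range.mpr (Nat.le_succ M))
        have h4 : ∑ n ∈ Finset.range M, (2 * g n) ^ p ≤ G :=
          ENNReal.sum_le_tsum _
        calc ∑ n ∈ Finset.range (M + 1), (V n) ^ p
            = (∑ n ∈ Finset.range M, (V (n + 1)) ^ p) + (V 0) ^ p := hsplitN
          _ ≤ (2⁻¹ * ∑ n ∈ Finset.range (M + 1), (V n) ^ p + 2⁻¹ * G) + (V 0) ^ p := by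
              refine add_le_add_left (h2.trans (add_le_add ?_ ?_)) _
              · exact mul_le_mul_right h3 _
              · exact mul_le_mul_right h4 _
          _ = ((V 0) ^ p + 2⁻¹ * G) + 2⁻¹ * ∑ n ∈ Finset.range (M + 1), (V n) ^ p := by
              ring
  -- cancellation
  have hsum : ∑' n : ℕ, (V n) ^ p ≤ 2 * (V 0) ^ p + G := by
    rw [ENNReal.tsum_eq_iSup_nat]
    refine iSup_le fun N => ?_
    by_cases hGtop : G = ∞
    · rw [hGtop]
      simp
    · have hPSfin : (∑ n ∈ Finset.range N, (V n) ^ p) ≠ ∞ := by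
        refine (ENNReal.sum_lt_top.mpr fun n _ => ?_).ne
        exact (ENNReal.rpow_ne_top_of_nonneg hp0.le (hVfin n)).lt_top
      have h5 : (∑ n ∈ Finset.range N, (V n) ^ p) / 2 ≤ (V 0) ^ p + 2⁻¹ * G := by
        rw [← ENNReal.sub_half hPSfin, tsub_le_iff_right]
        refine (hPS N).trans (le_of_eq ?_)
        rw [div_eq_mul_inv]
        ring
      calc ∑ n ∈ Finset.range N, (V n) ^ p
          = 2 * ((∑ n ∈ Finset.range N, (V n) ^ p) / 2) :=
            (ENNReal.mul_div_cancel two_ne_zero ENNReal.ofNat_ne_top).symm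
        _ ≤ 2 * ((V 0) ^ p + 2⁻¹ * G) := mul_le_mul_right h5 _
        _ = 2 * (V 0) ^ p + G := by
            rw [mul_add, ← mul_assoc, ENNReal.mul_inv_cancel two_ne_zero ENNReal.ofNat_ne_top,
              one_mul]
  -- bound for the initial term
  have hV0 : 2 * (V 0) ^ p ≤ (4 / (a : ℝ≥0∞)) ^ p * Sx := by
    have h0 : V 0 ≤ 2 / (a : ℝ≥0∞) * L 0 := by
      simp only [hV, Nat.cast_zero, zero_div, ENNReal.rpow_zero, one_mul]
      exact hD0
    have h1 : (V 0) ^ p ≤ (2 / (a : ℝ≥0∞)) ^ p * (L 0) ^ p := by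
      rw [← ENNReal.mul_rpow_of_nonneg _ _ hp0.le]
      exact ENNReal.rpow_le_rpow h0 hp0.le
    have h2 : (L 0) ^ p ≤ Sx := by
      rw [hSx]
      refine le_trans (le_of_eq ?_) (ENNReal.le_tsum 0)
      simp only [Nat.cast_zero, zero_div, ENNReal.rpow_zero, one_mul]
    calc 2 * (V 0) ^ p ≤ 2 * ((2 / (a : ℝ≥0∞)) ^ p * (L 0) ^ p) := mul_le_mul_right h1 _
      _ ≤ 2 ^ p * ((2 / (a : ℝ≥0∞)) ^ p * (L 0) ^ p) := by
          gcongr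
          exact ENNReal.le_rpow_self_of_one_le one_le_two hp
      _ = (2 * (2 / (a : ℝ≥0∞))) ^ p * (L 0) ^ p := by
          rw [ENNReal.mul_rpow_of_nonneg _ _ hp0.le, mul_assoc]
      _ = (4 / (a : ℝ≥0∞)) ^ p * (L 0) ^ p := by
          congr 2
          rw [← mul_div_assoc]
          norm_num
      _ ≤ (4 / (a : ℝ≥0∞)) ^ p * Sx := mul_le_mul_right h2 _
  -- bound for G
  have hGbound : G ≤ (24 * (2 : ℝ≥0∞) ^ (1 / α)) ^ p * (Sx + 2 * δ ^ p) := by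
    have hgb : ∀ n, 2 * g n ≤ 12 * (2 : ℝ≥0∞) ^ (1 / α)
        * ((2 : ℝ≥0∞) ^ ((n : ℝ) / α) * L n + δ * 2⁻¹ ^ n) := by
      intro n
      simp only [hg, hε]
      rw [hsplit n, ← epsSeq_mul hα n]
      calc 2 * ((2 : ℝ≥0∞) ^ (1 / α) * (2 : ℝ≥0∞) ^ ((n : ℝ) / α)
            * (2 * L n + 6 * epsSeq α δ n))
          ≤ 2 * ((2 : ℝ≥0∞) ^ (1 / α) * (2 : ℝ≥0∞) ^ ((n : ℝ) / α)
            * (6 * L n + 6 * epsSeq α δ n)) := by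
            gcongr
            norm_num
        _ = 12 * (2 : ℝ≥0∞) ^ (1 / α)
            * ((2 : ℝ≥0∞) ^ ((n : ℝ) / α) * L n
              + (2 : ℝ≥0∞) ^ ((n : ℝ) / α) * epsSeq α δ n) := by
            ring
    have hterm : ∀ n, (2 * g n) ^ p ≤ (24 * (2 : ℝ≥0∞) ^ (1 / α)) ^ p
        * (((2 : ℝ≥0∞) ^ ((n : ℝ) / α) * L n) ^ p + (δ * 2⁻¹ ^ n) ^ p) := by
      intro n
      calc (2 * g n) ^ p ≤ (12 * (2 : ℝ≥0∞) ^ (1 / α)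
            * ((2 : ℝ≥0∞) ^ ((n : ℝ) / α) * L n + δ * 2⁻¹ ^ n)) ^ p :=
            ENNReal.rpow_le_rpow (hgb n) hp0.le
        _ = (12 * (2 : ℝ≥0∞) ^ (1 / α)) ^ p
            * ((2 : ℝ≥0∞) ^ ((n : ℝ) / α) * L n + δ * 2⁻¹ ^ n) ^ p := by
            rw [ENNReal.mul_rpow_of_nonneg _ _ hp0.le]
        _ ≤ (12 * (2 : ℝ≥0∞) ^ (1 / α)) ^ p
            * ((2 : ℝ≥0∞) ^ (p - 1) * (((2 : ℝ≥0∞) ^ ((n : ℝ) / α) * L n) ^ p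
              + (δ * 2⁻¹ ^ n) ^ p)) := by
            gcongr
            exact ENNReal.rpow_add_le_mul_rpow_add_rpow _ _ hp
        _ ≤ (24 * (2 : ℝ≥0∞) ^ (1 / α)) ^ p
            * (((2 : ℝ≥0∞) ^ ((n : ℝ) / α) * L n) ^ p + (δ * 2⁻¹ ^ n) ^ p) := by
            rw [← mul_assoc]
            gcongr ?_ * _
            calc (12 * (2 : ℝ≥0∞) ^ (1 / α)) ^ p * (2 : ℝ≥0∞) ^ (p - 1)
                ≤ (12 * (2 : ℝ≥0∞) ^ (1 / α)) ^ p * (2 : ℝ≥0∞) ^ p := by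
                  gcongr
                  · exact one_le_two
                  · linarith
              _ = (24 * (2 : ℝ≥0∞) ^ (1 / α)) ^ p := by
                  rw [← ENNReal.mul_rpow_of_nonneg _ _ hp0.le]
                  congr 1
                  ring
    have hgeo : ∑' n : ℕ, (δ * 2⁻¹ ^ n) ^ p ≤ 2 * δ ^ p := by
      have h1 : ∀ n : ℕ, (δ * 2⁻¹ ^ n) ^ p = δ ^ p * ((2⁻¹ : ℝ≥0∞) ^ p) ^ n := by
        intro n
        rw [ENNReal.mul_rpow_of_nonneg _ _ hp0.le]
        congr 1
        rw [← ENNReal.rpow_natCast (2⁻¹ : ℝ≥0∞) n, ← ENNReal.rpow_mul, mul_comm,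
          ENNReal.rpow_mul, ENNReal.rpow_natCast]
      calc ∑' n : ℕ, (δ * 2⁻¹ ^ n) ^ p = δ ^ p * ∑' n : ℕ, ((2⁻¹ : ℝ≥0∞) ^ p) ^ n := by
            simp only [h1]
            exact ENNReal.tsum_mul_left
        _ ≤ δ ^ p * ∑' n : ℕ, (2⁻¹ : ℝ≥0∞) ^ n := by
            gcongr with n
            calc (2⁻¹ : ℝ≥0∞) ^ p ≤ 2⁻¹ ^ (1 : ℝ) :=
                  ENNReal.rpow_le_rpow_of_exponent_ge (by norm_num) hp
              _ = 2⁻¹ := ENNReal.rpow_one _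
        _ = δ ^ p * 2 := by
            rw [ENNReal.tsum_geometric, ENNReal.one_sub_inv_two, inv_inv]
        _ = 2 * δ ^ p := mul_comm _ _
    calc G ≤ ∑' n : ℕ, (24 * (2 : ℝ≥0∞) ^ (1 / α)) ^ p
          * (((2 : ℝ≥0∞) ^ ((n : ℝ) / α) * L n) ^ p + (δ * 2⁻¹ ^ n) ^ p) :=
          ENNReal.tsum_le_tsum hterm
      _ = (24 * (2 : ℝ≥0∞) ^ (1 / α)) ^ p
          * (Sx + ∑' n : ℕ, (δ * 2⁻¹ ^ n) ^ p) := by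
          rw [ENNReal.tsum_mul_left, ENNReal.tsum_add]
      _ ≤ (24 * (2 : ℝ≥0∞) ^ (1 / α)) ^ p * (Sx + 2 * δ ^ p) :=
          mul_le_mul_right (add_le_add_right hgeo _) _
  -- put everything together
  calc ∑' n : ℕ, ((2 : ℝ≥0∞) ^ ((n : ℝ) / α) * eDiam (edist : X → X → ℝ≥0∞)
        (F T a ε n x)) ^ p
      = ∑' n : ℕ, (V n) ^ p := by rfl
    _ ≤ 2 * (V 0) ^ p + G := hsum
    _ ≤ (4 / (a : ℝ≥0∞)) ^ p * Sx
        + (24 * (2 : ℝ≥0∞) ^ (1 / α)) ^ p * (Sx + 2 * δ ^ p) := add_le_add hV0 hGbound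
    _ ≤ (4 / (a : ℝ≥0∞)) ^ p * (Sx + 2 * δ ^ p)
        + (24 * (2 : ℝ≥0∞) ^ (1 / α)) ^ p * (Sx + 2 * δ ^ p) := by
        exact add_le_add_left (mul_le_mul_right le_self_add _) _
    _ = ((4 / (a : ℝ≥0∞)) ^ p + (24 * (2 : ℝ≥0∞) ^ (1 / α)) ^ p) * (Sx + 2 * δ ^ p) := by
        rw [add_mul]
    _ ≤ (4 / (a : ℝ≥0∞) + 24 * (2 : ℝ≥0∞) ^ (1 / α)) ^ p * (Sx + 2 * δ ^ p) :=
        mul_le_mul_left (ENNReal.add_rpow_le_rpow_add _ _ hp) _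

end LocDudley

open LocDudley in
/-- **A local form of Dudley's inequality** (Lemma 4.4): there are constants `C, a`
depending only on `α` such that
`γ_{α,p}(T) ≤ C [sup_{x∈T} Σ_n (2^{n/α} e_n^{a,x}(T))^p]^{1/p}`. -/
theorem local_dudley (α : ℝ) (hα : 0 < α) :
    ∃ (C : ℝ≥0∞) (a : ℝ≥0), 0 < C ∧ C ≠ ∞ ∧ 0 < a ∧
      ∀ (X : Type u) [MetricSpace X] (T : Set X) (p : ℝ), 1 ≤ p →
        gammaF (edist : X → X → ℝ≥0∞) α p T ≤
          C * (⨆ x ∈ T, ∑' n : ℕ,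
            ((2 : ℝ≥0∞) ^ ((n : ℝ) / α) * locEnt n a x T) ^ p) ^ p⁻¹ := by
  classical
  set aN : ℝ≥0 := 8⁻¹ * min 1 ((2 : ℝ≥0) ^ (-α⁻¹)) with haN
  have haN0 : aN ≠ 0 := by
    have h1 : (0 : ℝ≥0) < (2 : ℝ≥0) ^ (-α⁻¹) := NNReal.rpow_pos (by norm_num)
    have h2 : (0 : ℝ≥0) < 8⁻¹ * min 1 ((2 : ℝ≥0) ^ (-α⁻¹)) :=
      mul_pos (by norm_num) (lt_min one_pos h1)
    rw [haN]
    exact h2.ne'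
  set C : ℝ≥0∞ := 4 / (aN : ℝ≥0∞) + 24 * (2 : ℝ≥0∞) ^ (1 / α) with hC
  have hC0 : 0 < C := by
    rw [hC]
    exact lt_of_lt_of_le (ENNReal.div_pos (by norm_num) ENNReal.coe_ne_top) le_self_add
  have hCt : C ≠ ∞ := by
    rw [hC]
    refine ENNReal.add_ne_top.mpr ⟨?_, ?_⟩
    · exact (ENNReal.div_lt_top (by norm_num) (by exact_mod_cast haN0)).ne
    · exact ENNReal.mul_ne_top (by norm_num) (two_rpow_ne_top (by positivity))
  -- bounds on aN
  have haN1 : (aN : ℝ≥0∞) ≤ (8 : ℝ≥0∞)⁻¹ := by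
    have h1 : aN ≤ 8⁻¹ := by
      rw [haN]
      calc 8⁻¹ * min 1 ((2 : ℝ≥0) ^ (-α⁻¹)) ≤ 8⁻¹ * 1 :=
            mul_le_mul_right (min_le_left _ _) _
        _ = 8⁻¹ := mul_one _
    calc (aN : ℝ≥0∞) ≤ ((8⁻¹ : ℝ≥0) : ℝ≥0∞) := ENNReal.coe_le_coe.mpr h1
      _ = (8 : ℝ≥0∞)⁻¹ := by
          rw [ENNReal.coe_inv (by norm_num)]
          norm_num
  have hahalf : (aN : ℝ≥0∞) < 1 / 2 := by
    refine lt_of_le_of_lt haN1 ?_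
    rw [one_div]
    exact ENNReal.inv_lt_inv.mpr (by norm_num)
  have haN2 : (aN : ℝ≥0∞) ≤ 8⁻¹ * (2 : ℝ≥0∞) ^ (-α⁻¹) := by
    have h1 : aN ≤ 8⁻¹ * (2 : ℝ≥0) ^ (-α⁻¹) := by
      rw [haN]
      exact mul_le_mul_right (min_le_right _ _) _
    calc (aN : ℝ≥0∞) ≤ ((8⁻¹ * (2 : ℝ≥0) ^ (-α⁻¹) : ℝ≥0) : ℝ≥0∞) := ENNReal.coe_le_coe.mpr h1
      _ = 8⁻¹ * (2 : ℝ≥0∞) ^ (-α⁻¹) := by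
          rw [ENNReal.coe_mul, ENNReal.coe_inv (by norm_num),
            ENNReal.coe_rpow_of_ne_zero (by norm_num)]
          norm_num
  have hq : (2 : ℝ≥0∞) ^ (1 / α) * (2 * (aN : ℝ≥0∞)) ≤ 2⁻¹ := by
    have h48 : (2 : ℝ≥0∞) * 8⁻¹ = 4⁻¹ := by
      rw [show (8 : ℝ≥0∞) = 2 * 4 by norm_num,
        ENNReal.mul_inv (Or.inl two_ne_zero) (Or.inl ENNReal.ofNat_ne_top), ← mul_assoc,
        ENNReal.mul_inv_cancel two_ne_zero ENNReal.ofNat_ne_top, one_mul]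
    calc (2 : ℝ≥0∞) ^ (1 / α) * (2 * (aN : ℝ≥0∞))
        ≤ (2 : ℝ≥0∞) ^ (1 / α) * (2 * (8⁻¹ * (2 : ℝ≥0∞) ^ (-α⁻¹))) := by gcongr
      _ = ((2 : ℝ≥0∞) ^ (1 / α) * (2 : ℝ≥0∞) ^ (-α⁻¹)) * (2 * 8⁻¹) := by ring
      _ = 1 * (2 * 8⁻¹) := by
          rw [← ENNReal.rpow_add _ _ two_ne_zero ENNReal.ofNat_ne_top, one_div,
            add_neg_cancel, ENNReal.rpow_zero]
      _ = 4⁻¹ := by rw [one_mul, h48]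
      _ ≤ 2⁻¹ := ENNReal.inv_le_inv.mpr (by norm_num)
  refine ⟨C, aN, hC0, hCt, pos_iff_ne_zero.mpr haN0, ?_⟩
  intro X _inst T p hp
  have hp0 : (0 : ℝ) < p := lt_of_lt_of_le one_pos hp
  have hpinv0 : (0 : ℝ) < p⁻¹ := inv_pos.mpr hp0
  by_cases hX : Nonempty X
  swap
  · -- X is empty
    have P : Admissible T :=
      { piece := fun _ _ => (∅ : Set X)
        self_mem := fun _ x _ => (hX ⟨x⟩).elim
        subset_base := fun _ x _ => (hX ⟨x⟩).elim
        partition := fun _ x _ => (hX ⟨x⟩).elim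
        finite_pieces := fun n => by
          have he : {A : Set X | ∃ x ∈ T, (∅ : Set X) = A} = ∅ := by
            ext A
            simp only [Set.mem_setOf_eq, Set.mem_empty_iff_false, iff_false, not_exists]
            intro x _
            exact (hX ⟨x⟩).elim
          rw [he]
          exact Set.finite_empty
        card_pieces := fun n => by
          have he : {A : Set X | ∃ x ∈ T, (∅ : Set X) = A} = ∅ := by
            ext A
            simp only [Set.mem_setOf_eq, Set.mem_empty_iff_false, iff_false, not_exists]
            intro x _
            exact (hX ⟨x⟩).elim
          rw [he]
          simpa using Nat.pos_pow_of_pos _ (by norm_num)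
        nested := fun _ x _ => (hX ⟨x⟩).elim }
    have hsup0 : (⨆ x ∈ T, ∑' n : ℕ,
        ((2 : ℝ≥0∞) ^ ((n : ℝ) / α) * eDiam (edist : X → X → ℝ≥0∞) (P.piece n x)) ^ p) = 0 :=
      le_antisymm (iSup₂_le fun x _ => (hX ⟨x⟩).elim) zero_le
    calc gammaF (edist : X → X → ℝ≥0∞) α p T
        ≤ (⨆ x ∈ T, ∑' n : ℕ,
            ((2 : ℝ≥0∞) ^ ((n : ℝ) / α) * eDiam (edist : X → X → ℝ≥0∞) (P.piece n x)) ^ p) ^ p⁻¹ :=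
          iInf_le _ P
      _ = 0 := by rw [hsup0]; exact ENNReal.zero_rpow_of_pos hpinv0
      _ ≤ _ := zero_le
  · haveI := hX
    set S : ℝ≥0∞ := ⨆ x ∈ T, ∑' n : ℕ,
        ((2 : ℝ≥0∞) ^ ((n : ℝ) / α) * locEnt n aN x T) ^ p with hS
    rcases eq_or_ne S ∞ with hStop | hSfin
    · calc gammaF (edist : X → X → ℝ≥0∞) α p T ≤ ∞ := le_top
        _ ≤ C * S ^ p⁻¹ := by
            rw [hStop, ENNReal.top_rpow_of_pos hpinv0, ENNReal.mul_top hC0.ne']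
    · refine ENNReal.le_of_forall_pos_le_add fun η hη hlt => ?_
      set δ : ℝ≥0∞ := (η : ℝ≥0∞) / (4 * C) with hδ
      have h4C0 : (4 : ℝ≥0∞) * C ≠ 0 := mul_ne_zero (by norm_num) hC0.ne'
      have h4Ct : (4 : ℝ≥0∞) * C ≠ ∞ := ENNReal.mul_ne_top (by norm_num) hCt
      have hδ0 : δ ≠ 0 := by
        rw [hδ]
        simp only [ne_eq, ENNReal.div_eq_zero_iff, not_or]
        exact ⟨by exact_mod_cast hη.ne', h4Ct⟩
      have hδt : δ ≠ ∞ := by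
        rw [hδ]
        exact (ENNReal.div_lt_top ENNReal.coe_ne_top h4C0).ne
      have hLfin : ∀ x ∈ T, ∀ m : ℕ, locEnt m aN x T ≠ ∞ := by
        intro x hx m
        have h1 : (∑' n : ℕ, ((2 : ℝ≥0∞) ^ ((n : ℝ) / α) * locEnt n aN x T) ^ p) ≤ S :=
          le_iSup₂ (f := fun x (_ : x ∈ T) => ∑' n : ℕ,
            ((2 : ℝ≥0∞) ^ ((n : ℝ) / α) * locEnt n aN x T) ^ p) x hx
        have h2 : ((2 : ℝ≥0∞) ^ ((m : ℝ) / α) * locEnt m aN x T) ^ p ≠ ∞ :=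
          ne_top_of_le_ne_top hSfin ((ENNReal.le_tsum m).trans h1)
        intro hc
        rw [hc, ENNReal.mul_top two_rpow_ne_zero, ENNReal.top_rpow_of_pos hp0] at h2
        exact h2 rfl
      have key : ∀ x ∈ T, (∑' n : ℕ, ((2 : ℝ≥0∞) ^ ((n : ℝ) / α)
          * eDiam (edist : X → X → ℝ≥0∞) (F T aN (epsSeq α δ) n x)) ^ p)
            ≤ C ^ p * (S + 2 * δ ^ p) := by
        intro x hx
        refine (sum_le_of_chain hα hp haN0 hahalf hq hδ0 hδt hx (hLfin x hx)).trans ?_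
        rw [hC]
        refine mul_le_mul_right (add_le_add_left ?_ _) _
        exact le_iSup₂ (f := fun x (_ : x ∈ T) => ∑' n : ℕ,
          ((2 : ℝ≥0∞) ^ ((n : ℝ) / α) * locEnt n aN x T) ^ p) x hx
      calc gammaF (edist : X → X → ℝ≥0∞) α p T
          ≤ (⨆ x ∈ T, ∑' n : ℕ, ((2 : ℝ≥0∞) ^ ((n : ℝ) / α)
              * eDiam (edist : X → X → ℝ≥0∞) (F T aN (epsSeq α δ) n x)) ^ p) ^ p⁻¹ :=
            iInf_le _ (adm T aN (epsSeq α δ))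
        _ ≤ (C ^ p * (S + 2 * δ ^ p)) ^ p⁻¹ :=
            ENNReal.rpow_le_rpow (iSup₂_le key) hpinv0.le
        _ = C * (S + 2 * δ ^ p) ^ p⁻¹ := by
            rw [ENNReal.mul_rpow_of_nonneg _ _ hpinv0.le, ← ENNReal.rpow_mul,
              mul_inv_cancel₀ hp0.ne', ENNReal.rpow_one]
        _ ≤ C * (S ^ p⁻¹ + (2 * δ ^ p) ^ p⁻¹) :=
            mul_le_mul_right (ENNReal.rpow_add_le_add_rpow _ _ hpinv0.le
              (inv_le_one_of_one_le₀ hp)) _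
        _ = C * S ^ p⁻¹ + C * (2 * δ ^ p) ^ p⁻¹ := mul_add _ _ _
        _ ≤ C * S ^ p⁻¹ + ↑η := by
            refine add_le_add_right ?_ _
            have hsplit2 : ((2 : ℝ≥0∞) * δ ^ p) ^ p⁻¹ ≤ 2 * δ := by
              rw [ENNReal.mul_rpow_of_nonneg _ _ hpinv0.le, ← ENNReal.rpow_mul,
                mul_inv_cancel₀ hp0.ne', ENNReal.rpow_one]
              refine mul_le_mul_left ?_ _
              calc (2 : ℝ≥0∞) ^ p⁻¹ ≤ 2 ^ (1 : ℝ) :=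
                    ENNReal.rpow_le_rpow_of_exponent_le one_le_two (inv_le_one_of_one_le₀ hp)
                _ = 2 := ENNReal.rpow_one _
            calc C * (2 * δ ^ p) ^ p⁻¹ ≤ C * (2 * δ) := mul_le_mul_right hsplit2 _
              _ ≤ 4 * C * δ := by
                  rw [show C * (2 * δ) = 2 * C * δ by ring]
                  refine mul_le_mul_left (mul_le_mul_left ?_ _) _
                  norm_num
              _ = 4 * C * ((η : ℝ≥0∞) / (4 * C)) := by rw [hδ]
              _ ≤ ↑η := by
                  rw [mul_assoc]
                  calc (4 : ℝ≥0∞) * (C * (↑η / (4 * C))) = 4 * C * (↑η / (4 * C)) := by ring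
                    _ ≤ ↑η := ENNReal.mul_div_le
end
end

section
/- (Interpolation lemma.) Let (X,d) be a metric space, T ⊆ X, α > 0, and let f : X → [0,∞] be a penalty function. Define K(t,x) := inf_{y∈X} { f(y) + t·d(x,y) }, and assume that for every t ≥ 0 and x ∈ T a minimizer π_t(x) ∈ X of this infimum exists. Then there is a constant C depending only on α such that for every a > 0, sup_{x∈T} Σ_{n≥0} 2^{n/α} d(x, π_{a·2^{n/α}}(x)) ≤ C · (1/a) · sup_{x∈T} f(x). -/
open scoped ENNReal NNReal
open EMetric Set

noncomputable section

universe u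

/-- **Interpolation lemma** (Lemma 4.6): if `π_t(x)` minimizes `y ↦ f(y) + t·d(x,y)`
for every `t ≥ 0`, `x ∈ T`, then
`sup_{x∈T} Σ_n 2^{n/α} d(x, π_{a·2^{n/α}}(x)) ≤ C (1/a) sup_{x∈T} f(x)`
for every `a > 0`, with `C` depending only on `α`. -/
theorem interpolation_lemma (α : ℝ) (hα : 0 < α) :
    ∃ C : ℝ≥0∞, 0 < C ∧ C ≠ ∞ ∧
      ∀ (X : Type u) [MetricSpace X] (T : Set X) (f : X → ℝ≥0∞) (π : ℝ≥0 → X → X),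
        (∀ (t : ℝ≥0), ∀ x ∈ T, ∀ y : X,
            f (π t x) + (t : ℝ≥0∞) * edist x (π t x) ≤ f y + (t : ℝ≥0∞) * edist x y) →
        ∀ a : ℝ≥0, 0 < a →
          (⨆ x ∈ T, ∑' n : ℕ,
              (2 : ℝ≥0∞) ^ ((n : ℝ) / α) *
                edist x (π (a * (2 : ℝ≥0) ^ ((n : ℝ) / α)) x)) ≤
            C * (a : ℝ≥0∞)⁻¹ * ⨆ x ∈ T, f x := by
  set c : ℝ≥0 := (2 : ℝ≥0) ^ (-(1/α)) with hcdef
  have hc1 : c < 1 := by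
    rw [← NNReal.coe_lt_coe, hcdef, NNReal.coe_rpow, NNReal.coe_one, NNReal.coe_ofNat]
    exact Real.rpow_lt_one_of_one_lt_of_neg one_lt_two (neg_lt_zero.mpr (by positivity))
  set b : ℝ≥0 := 1 - c with hbdef
  have hb0 : b ≠ 0 := by
    simp only [hbdef, ne_eq, tsub_eq_zero_iff_le, not_le]
    exact hc1
  have hbE0 : (b : ℝ≥0∞) ≠ 0 := by exact_mod_cast hb0
  refine ⟨1 + (b : ℝ≥0∞)⁻¹, lt_of_lt_of_le one_pos le_self_add, ?_, ?_⟩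
  · exact ENNReal.add_ne_top.mpr ⟨ENNReal.one_ne_top, ENNReal.inv_ne_top.mpr hbE0⟩
  intro X _ T f π hmin a ha
  have haE : (a : ℝ≥0∞) ≠ 0 := by exact_mod_cast ha.ne'
  refine iSup₂_le fun x hx => ?_
  set t : ℕ → ℝ≥0 := fun n => a * (2:ℝ≥0) ^ ((n:ℝ)/α) with htdef
  set θ : ℕ → ℝ≥0∞ := fun n => edist x (π (t n) x) with hθdef
  set K : ℕ → ℝ≥0∞ := fun n => f (π (t n) x) + (t n : ℝ≥0∞) * θ n with hKdef
  have hKf : ∀ n, K n ≤ f x := fun n => by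
    have h := hmin (t n) x hx x
    simpa [hKdef, hθdef] using h
  have htc : ∀ k, t k = t (k+1) * c := by
    intro k
    simp only [htdef, hcdef, mul_assoc, ← NNReal.rpow_add two_ne_zero]
    congr 2
    push_cast
    field_simp
    ring
  have hsplit : ∀ k, (t k : ℝ≥0∞) + (t (k+1) : ℝ≥0∞) * (b : ℝ≥0∞) = (t (k+1) : ℝ≥0∞) := by
    intro k
    have h : t k + t (k+1) * b = t (k+1) := by
      rw [htc k, hbdef, ← mul_add, add_tsub_cancel_of_le hc1.le, mul_one]
    exact_mod_cast congrArg (fun r : ℝ≥0 => (r : ℝ≥0∞)) h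
  set g : ℕ → ℝ≥0∞ := fun n => (t n : ℝ≥0∞) * θ n with hgdef
  have key : ∀ k, K k + (b : ℝ≥0∞) * g (k+1) ≤ K (k+1) := by
    intro k
    have h := hmin (t k) x hx (π (t (k+1)) x)
    have hfac : (t k : ℝ≥0∞) * θ (k+1) + (b:ℝ≥0∞) * g (k+1)
        = ((t k : ℝ≥0∞) + (t (k+1) : ℝ≥0∞) * (b:ℝ≥0∞)) * θ (k+1) := by
      simp only [hgdef]; ring
    calc K k + (b : ℝ≥0∞) * g (k+1)
        ≤ (f (π (t (k+1)) x) + (t k : ℝ≥0∞) * θ (k+1)) + (b : ℝ≥0∞) * g (k+1) :=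
          add_le_add h le_rfl
      _ = K (k+1) := by rw [add_assoc, hfac, hsplit]
  have hsum : ∀ N, K 0 + ∑ k ∈ Finset.range N, (b : ℝ≥0∞) * g (k+1) ≤ K N := by
    intro N
    induction N with
    | zero => simp
    | succ N ih =>
        rw [Finset.sum_range_succ, ← add_assoc]
        exact le_trans (add_le_add ih le_rfl) (key N)
  have hshift : ∀ N, ∑ k ∈ Finset.range N, g (k+1) ≤ (b : ℝ≥0∞)⁻¹ * f x := by
    intro N
    have h1 : (b : ℝ≥0∞) * ∑ k ∈ Finset.range N, g (k+1) ≤ f x := by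
      rw [Finset.mul_sum]
      exact le_trans (le_trans le_add_self (hsum N)) (hKf N)
    calc ∑ k ∈ Finset.range N, g (k+1)
        = (b : ℝ≥0∞)⁻¹ * ((b : ℝ≥0∞) * ∑ k ∈ Finset.range N, g (k+1)) := by
          rw [← mul_assoc, ENNReal.inv_mul_cancel hbE0 ENNReal.coe_ne_top, one_mul]
      _ ≤ (b : ℝ≥0∞)⁻¹ * f x := mul_le_mul_right h1 _
  have hg0 : g 0 ≤ f x := le_trans le_add_self (hKf 0)
  have htsum : ∑' n, g n ≤ (1 + (b : ℝ≥0∞)⁻¹) * f x := by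
    refine Summable.tsum_le_of_sum_le ENNReal.summable fun s => ?_
    obtain ⟨N, hN⟩ := s.exists_nat_subset_range
    calc ∑ n ∈ s, g n
        ≤ ∑ n ∈ Finset.range (N+1), g n :=
          Finset.sum_le_sum_of_subset (hN.trans (Finset.range_subset_range.mpr (Nat.le_succ N)))
      _ = ∑ k ∈ Finset.range N, g (k+1) + g 0 := Finset.sum_range_succ' g N
      _ ≤ (b : ℝ≥0∞)⁻¹ * f x + f x := add_le_add (hshift N) hg0
      _ = (1 + (b : ℝ≥0∞)⁻¹) * f x := by ring
  have hterm : ∀ n : ℕ, (2 : ℝ≥0∞) ^ ((n : ℝ) / α) * θ n = (a : ℝ≥0∞)⁻¹ * g n := by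
    intro n
    have hco : (t n : ℝ≥0∞) = (a : ℝ≥0∞) * (2 : ℝ≥0∞) ^ ((n : ℝ) / α) := by
      rw [htdef]
      push_cast [ENNReal.coe_rpow_of_ne_zero two_ne_zero]
      rfl
    simp only [hgdef]
    rw [hco, ← mul_assoc, ← mul_assoc, ENNReal.inv_mul_cancel haE ENNReal.coe_ne_top,
      one_mul]
  calc (∑' n : ℕ, (2 : ℝ≥0∞) ^ ((n : ℝ) / α) *
          edist x (π (a * (2 : ℝ≥0) ^ ((n : ℝ) / α)) x))
      = ∑' n : ℕ, (a : ℝ≥0∞)⁻¹ * g n := by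
        refine tsum_congr fun n => ?_
        rw [← hterm n, hθdef]
    _ = (a : ℝ≥0∞)⁻¹ * ∑' n, g n := ENNReal.tsum_mul_left
    _ ≤ (a : ℝ≥0∞)⁻¹ * ((1 + (b : ℝ≥0∞)⁻¹) * f x) := mul_le_mul_right htsum _
    _ = (1 + (b : ℝ≥0∞)⁻¹) * (a : ℝ≥0∞)⁻¹ * f x := by ring
    _ ≤ (1 + (b : ℝ≥0∞)⁻¹) * (a : ℝ≥0∞)⁻¹ * ⨆ x ∈ T, f x :=
        mul_le_mul_right (le_iSup₂ (f := fun x _ => f x) x hx) _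
end
end

section
/- (Projection property of interpolation minimizers.) Let (X,d) be a metric space, f : X → [0,∞] a penalty function, u ≥ 0, and suppose T = { x ∈ X : f(x) ≤ u }. Define K(t,x) := inf_{y∈X} { f(y) + t·d(x,y) } and assume minimizers exist for every t ≥ 0 and x ∈ T. Then for every t ≥ 0 the minimizers π_t(x) can be chosen so that: (i) K_t := { π_t(x) : x ∈ T } ⊆ T, and (ii) π_t(π_t(x)) = π_t(x) for every x ∈ T. -/
open scoped ENNReal NNReal
open EMetric Set

noncomputable section

universe v

/-- **Projection property of interpolation minimizers** (Lemma 4.8).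
If `T = {x : f(x) ≤ u}` and for every `t ≥ 0` and `x ∈ T` a minimizer of
`y ↦ f(y) + t·d(x,y)` exists, then the minimizers `π_t` can be chosen so that
`K_t = π_t(T) ⊆ T` and `π_t(π_t(x)) = π_t(x)` for all `x ∈ T`. -/
theorem projection_property (X : Type v) [MetricSpace X] (f : X → ℝ≥0∞) (u : ℝ≥0∞)
    (T : Set X) (hT : T = {x : X | f x ≤ u})
    (hmin : ∀ (t : ℝ≥0), ∀ x ∈ T, ∃ y : X, ∀ z : X,
      f y + (t : ℝ≥0∞) * edist x y ≤ f z + (t : ℝ≥0∞) * edist x z) :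
    ∃ π : ℝ≥0 → X → X,
      (∀ (t : ℝ≥0), ∀ x ∈ T, ∀ z : X,
        f (π t x) + (t : ℝ≥0∞) * edist x (π t x) ≤ f z + (t : ℝ≥0∞) * edist x z) ∧
      (∀ t : ℝ≥0, (π t) '' T ⊆ T) ∧
      (∀ t : ℝ≥0, ∀ x ∈ T, π t (π t x) = π t x) := by
  classical
  set P : ℝ≥0 → X → Prop := fun t x => ∀ z : X,
    f x + (t : ℝ≥0∞) * edist x x ≤ f z + (t : ℝ≥0∞) * edist x z with hP
  set π : ℝ≥0 → X → X :=
    fun t x => if h : x ∈ T ∧ ¬ P t x then (hmin t x h.1).choose else x with hπ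
  have key : ∀ (t : ℝ≥0), ∀ x ∈ T, ∀ z : X,
      f (π t x) + (t : ℝ≥0∞) * edist x (π t x) ≤ f z + (t : ℝ≥0∞) * edist x z := by
    intro t x hx z
    simp only [hπ]
    by_cases h : x ∈ T ∧ ¬ P t x
    · rw [dif_pos h]; exact (hmin t x h.1).choose_spec z
    · rw [dif_neg h]
      have hPx : P t x := by by_contra hc; exact h ⟨hx, hc⟩
      exact hPx z
  have hmem : ∀ (t : ℝ≥0), ∀ x ∈ T, π t x ∈ T := by
    intro t x hx
    have h1 := key t x hx x
    simp only [edist_self, mul_zero, add_zero] at h1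
    have h2 : f (π t x) ≤ f x := le_trans (le_add_right le_rfl) h1
    rw [hT] at hx ⊢
    exact le_trans h2 hx
  refine ⟨π, key, ?_, ?_⟩
  · intro t y hy
    obtain ⟨x, hx, rfl⟩ := hy
    exact hmem t x hx
  · intro t x hx
    have hPy : P t (π t x) := by
      intro z
      have h1 := key t x hx z
      have h2 : f (π t x) + (t : ℝ≥0∞) * edist x (π t x)
          ≤ f z + (t : ℝ≥0∞) * edist (π t x) z + (t : ℝ≥0∞) * edist x (π t x) := by
        calc f (π t x) + (t : ℝ≥0∞) * edist x (π t x)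
            ≤ f z + (t : ℝ≥0∞) * edist x z := h1
          _ ≤ f z + (t : ℝ≥0∞) * (edist x (π t x) + edist (π t x) z) := by
              gcongr
              exact edist_triangle x (π t x) z
          _ = f z + (t : ℝ≥0∞) * edist (π t x) z + (t : ℝ≥0∞) * edist x (π t x) := by ring
      have hfin : (t : ℝ≥0∞) * edist x (π t x) ≠ ⊤ :=
        ENNReal.mul_ne_top ENNReal.coe_ne_top (edist_ne_top x (π t x))
      have h3 : f (π t x) ≤ f z + (t : ℝ≥0∞) * edist (π t x) z :=
        (ENNReal.add_le_add_iff_right hfin).mp h2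
      simpa [edist_self] using h3
    conv_lhs => rw [hπ]; dsimp only
    rw [dif_neg]
    rintro ⟨-, hnP⟩
    exact hnP hPy
end
end

section
/- (q-interpolation lemma.) Let (X,d) be a metric space, T ⊆ X, α > 0, q ≥ 1, and let f : X → [0,∞] be a penalty function. Define K(t,x) := inf_{y∈X} { f(y) + t^q·d(x,y)^q } and assume that for every t ≥ 0 and x ∈ T a minimizer π_t(x) ∈ X exists. Then there is a constant C depending only on α such that for every a > 0, sup_{x∈T} Σ_{n≥0} ( 2^{n/α} d(x, π_{a·2^{n/α}}(x)) )^q ≤ C · (1/a^q) · sup_{x∈T} f(x). -/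
open scoped ENNReal NNReal
open EMetric Set

noncomputable section

universe u

/-- **q-interpolation lemma** (Lemma 5.8). If `π_t(x)` minimizes
`y ↦ f(y) + t^q·d(x,y)^q` for every `t ≥ 0`, `x ∈ T`, then for every `a > 0`,
`sup_{x∈T} Σ_n (2^{n/α} d(x, π_{a·2^{n/α}}(x)))^q ≤ C (1/a^q) sup_{x∈T} f(x)`,
with `C` depending only on `α`. -/
theorem q_interpolation_lemma (α : ℝ) (hα : 0 < α) :
    ∃ C : ℝ≥0∞, 0 < C ∧ C ≠ ∞ ∧
      ∀ (X : Type u) [MetricSpace X] (T : Set X) (q : ℝ), 1 ≤ q →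
        ∀ (f : X → ℝ≥0∞) (π : ℝ≥0 → X → X),
          (∀ (t : ℝ≥0), ∀ x ∈ T, ∀ y : X,
              f (π t x) + (t : ℝ≥0∞) ^ q * edist x (π t x) ^ q ≤
                f y + (t : ℝ≥0∞) ^ q * edist x y ^ q) →
          ∀ a : ℝ≥0, 0 < a →
            (⨆ x ∈ T, ∑' n : ℕ,
                ((2 : ℝ≥0∞) ^ ((n : ℝ) / α) *
                  edist x (π (a * (2 : ℝ≥0) ^ ((n : ℝ) / α)) x)) ^ q) ≤
              C * ((a : ℝ≥0∞) ^ q)⁻¹ * ⨆ x ∈ T, f x := by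
  have hαinv : (0:ℝ) < 1 / α := by positivity
  set ρ : ℝ≥0∞ := ((2:ℝ≥0∞) ^ ((1:ℝ)/α))⁻¹ with hρdef
  have h2 : (1:ℝ≥0∞) < (2:ℝ≥0∞) ^ ((1:ℝ)/α) :=
    ENNReal.one_lt_rpow (by norm_num) hαinv
  have hρ1 : ρ < 1 := by rw [hρdef, ENNReal.inv_lt_one]; exact h2
  have hρtop : ρ ≠ ∞ := (hρ1.trans ENNReal.one_lt_top).ne
  have hsub0 : (1:ℝ≥0∞) - ρ ≠ 0 := by
    simp only [ne_eq, tsub_eq_zero_iff_le, not_le]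
    exact hρ1
  have hsubtop : (1:ℝ≥0∞) - ρ ≠ ∞ :=
    (lt_of_le_of_lt tsub_le_self ENNReal.one_lt_top).ne
  refine ⟨(1 - ρ)⁻¹, ENNReal.inv_pos.mpr hsubtop, ENNReal.inv_ne_top.mpr hsub0, ?_⟩
  intro X _ T q hq f π hmin a ha
  have hq0 : (0:ℝ) < q := lt_of_lt_of_le one_pos hq
  refine iSup₂_le fun x hx => ?_
  set t : ℕ → ℝ≥0 := fun n => a * (2:ℝ≥0) ^ ((n:ℝ)/α) with ht
  set d : ℕ → ℝ≥0∞ := fun n => edist x (π (t n) x) with hd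
  set v : ℕ → ℝ≥0∞ := fun n => ((t n : ℝ≥0∞))^q * (d n)^q with hv
  set g : ℕ → ℝ≥0∞ := fun n => f (π (t n) x) with hg
  have hcoe : ∀ n : ℕ, ((t n : ℝ≥0∞)) = (a:ℝ≥0∞) * (2:ℝ≥0∞) ^ ((n:ℝ)/α) := by
    intro n
    rw [ht]
    push_cast [ENNReal.coe_rpow_of_ne_zero (two_ne_zero)]
    ring
  have hvF : ∀ n, g n + v n ≤ f x := by
    intro n
    have h1 := hmin (t n) x hx x
    simpa [hg, hv, hd, edist_self, ENNReal.zero_rpow_of_pos hq0] using h1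
  -- t (n+1) ^ q = t n ^ q * 2 ^ (q/α)
  have htsucc : ∀ n : ℕ, ((t (n+1) : ℝ≥0∞))^q = ((t n : ℝ≥0∞))^q * (2:ℝ≥0∞)^(q/α) := by
    intro n
    rw [hcoe, hcoe]
    have hexp : ((n+1 : ℕ) : ℝ)/α = (n:ℝ)/α + 1/α := by push_cast; ring
    rw [hexp, ENNReal.rpow_add _ _ (by norm_num) (by norm_num), ← mul_assoc,
      ENNReal.mul_rpow_of_nonneg _ _ hq0.le,
      ENNReal.mul_rpow_of_nonneg _ _ hq0.le,
      ← ENNReal.rpow_mul (2:ℝ≥0∞) (1/α) q]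
    congr 1
    ring
  have hkey : ∀ n, g n + v n ≤ g (n+1) + ρ * v (n+1) := by
    intro n
    have h1 := hmin (t n) x hx (π (t (n+1)) x)
    have h2 : g n + v n ≤ g (n+1) + ((t n : ℝ≥0∞))^q * (d (n+1))^q := by
      simpa [hg, hv, hd] using h1
    refine h2.trans (add_le_add_right ?_ _)
    have h3 : ((t n : ℝ≥0∞))^q ≤ ρ * ((t (n+1) : ℝ≥0∞))^q := by
      rw [htsucc, hρdef]
      have hsplit : (2:ℝ≥0∞)^(q/α) = (2:ℝ≥0∞)^((q-1)/α) * (2:ℝ≥0∞)^((1:ℝ)/α) := by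
        rw [← ENNReal.rpow_add _ _ (by norm_num) (by norm_num)]
        congr 1; ring
      rw [hsplit]
      have hcancel : ((2:ℝ≥0∞) ^ ((1:ℝ)/α))⁻¹ *
          (((t n : ℝ≥0∞))^q * ((2:ℝ≥0∞)^((q-1)/α) * (2:ℝ≥0∞)^((1:ℝ)/α)))
          = ((t n : ℝ≥0∞))^q * (2:ℝ≥0∞)^((q-1)/α) := by
        rw [mul_comm (((2:ℝ≥0∞) ^ ((1:ℝ)/α))⁻¹) _, mul_assoc, mul_assoc,
          ENNReal.mul_inv_cancel (ENNReal.rpow_pos (by norm_num) (by norm_num)).ne'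
            (ENNReal.rpow_ne_top_of_nonneg hαinv.le (by norm_num)), mul_one]
      rw [hcancel]
      have hone : (1:ℝ≥0∞) ≤ (2:ℝ≥0∞)^((q-1)/α) := by
        have := ENNReal.rpow_le_rpow_of_exponent_le (by norm_num : (1:ℝ≥0∞) ≤ 2)
          (div_nonneg (by linarith) hα.le : (0:ℝ) ≤ (q-1)/α)
        simpa using this
      exact le_mul_of_one_le_right' hone
    calc ((t n : ℝ≥0∞))^q * (d (n+1))^q
        ≤ (ρ * ((t (n+1) : ℝ≥0∞))^q) * (d (n+1))^q := mul_le_mul_left h3 _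
      _ = ρ * v (n+1) := by rw [hv]; ring
  have hind : ∀ N, ∑ n ∈ Finset.range N, v n ≤ g N + ρ * ∑ n ∈ Finset.range N, v (n+1) := by
    intro N
    induction N with
    | zero => simp
    | succ N ih =>
      rw [Finset.sum_range_succ, Finset.sum_range_succ]
      calc ∑ n ∈ Finset.range N, v n + v N
          ≤ (g N + ρ * ∑ n ∈ Finset.range N, v (n+1)) + v N := add_le_add_left ih _
        _ = (g N + v N) + ρ * ∑ n ∈ Finset.range N, v (n+1) := by ring
        _ ≤ (g (N+1) + ρ * v (N+1)) + ρ * ∑ n ∈ Finset.range N, v (n+1) :=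
            add_le_add_left (hkey N) _
        _ = g (N+1) + ρ * (∑ n ∈ Finset.range N, v (n+1) + v (N+1)) := by ring
  have hstep : ∀ N, ∑ n ∈ Finset.range N, v n ≤ f x + ρ * ∑ n ∈ Finset.range N, v n := by
    intro N
    have hshift : ∑ n ∈ Finset.range N, v (n+1) ≤ ∑ n ∈ Finset.range N, v n + v N := by
      calc ∑ n ∈ Finset.range N, v (n+1) ≤ (∑ n ∈ Finset.range N, v (n+1)) + v 0 :=
            self_le_add_right _ _
        _ = ∑ n ∈ Finset.range (N+1), v n := (Finset.sum_range_succ' v N).symm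
        _ = ∑ n ∈ Finset.range N, v n + v N := Finset.sum_range_succ v N
    calc ∑ n ∈ Finset.range N, v n
        ≤ g N + ρ * (∑ n ∈ Finset.range N, v n + v N) :=
          (hind N).trans (add_le_add_right (mul_le_mul_right hshift _) _)
      _ = (g N + ρ * v N) + ρ * ∑ n ∈ Finset.range N, v n := by ring
      _ ≤ (g N + v N) + ρ * ∑ n ∈ Finset.range N, v n := by
          gcongr
          exact mul_le_of_le_one_left (by positivity) hρ1.le
      _ ≤ f x + ρ * ∑ n ∈ Finset.range N, v n := add_le_add_left (hvF N) _
  have hfle : f x ≤ ⨆ x ∈ T, f x := le_iSup₂ (f := fun x _ => f x) x hx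
  have haq0 : ((a:ℝ≥0∞))^q ≠ 0 :=
    (ENNReal.rpow_pos (ENNReal.coe_pos.mpr ha) ENNReal.coe_ne_top).ne'
  have haqtop : ((a:ℝ≥0∞))^q ≠ ∞ :=
    ENNReal.rpow_ne_top_of_nonneg hq0.le ENNReal.coe_ne_top
  rcases eq_or_ne (f x) ∞ with hF | hF
  · have hS : (⨆ x ∈ T, f x) = ∞ := top_le_iff.mp (hF ▸ hfle)
    rw [hS, ENNReal.mul_top]
    · exact le_top
    · exact mul_ne_zero (ENNReal.inv_ne_zero.mpr hsubtop) (ENNReal.inv_ne_zero.mpr haqtop)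
  · -- f x finite
    have hvfin : ∀ n, v n ≤ f x := fun n => le_trans le_add_self (hvF n)
    have hsfin : ∀ N, ∑ n ∈ Finset.range N, v n ≠ ∞ := by
      intro N
      refine (lt_of_le_of_lt (Finset.sum_le_sum fun i _ => hvfin i) ?_).ne
      exact ENNReal.sum_lt_top.mpr fun i _ => lt_top_iff_ne_top.mpr hF
    have hbound : ∀ N, ∑ n ∈ Finset.range N, v n ≤ (1-ρ)⁻¹ * f x := by
      intro N
      set s := ∑ n ∈ Finset.range N, v n with hs
      have h1 : (1 - ρ) * s + ρ * s ≤ f x + ρ * s := by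
        rw [← add_mul, tsub_add_cancel_of_le hρ1.le, one_mul]
        exact hstep N
      have h2 : (1 - ρ) * s ≤ f x :=
        (ENNReal.add_le_add_iff_right (ENNReal.mul_ne_top hρtop (hsfin N))).mp h1
      calc s = (1-ρ)⁻¹ * ((1-ρ) * s) := by
            rw [← mul_assoc, ENNReal.inv_mul_cancel hsub0 hsubtop, one_mul]
        _ ≤ (1-ρ)⁻¹ * f x := mul_le_mul_right h2 _
    have htsum : ∑' n, v n ≤ (1-ρ)⁻¹ * f x := by
      rw [ENNReal.tsum_eq_iSup_nat]
      exact iSup_le hbound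
    have huv : ∀ n : ℕ,
        ((a:ℝ≥0∞))^q * ((2:ℝ≥0∞) ^ ((n:ℝ)/α) *
          edist x (π (a * (2:ℝ≥0) ^ ((n:ℝ)/α)) x)) ^ q = v n := by
      intro n
      simp only [hv, hd, ht]
      rw [ENNReal.coe_mul, ENNReal.coe_rpow_of_ne_zero two_ne_zero,
        ENNReal.mul_rpow_of_nonneg _ _ hq0.le,
        ENNReal.mul_rpow_of_nonneg _ _ hq0.le, mul_assoc, ENNReal.coe_two]
    have hmain : ((a:ℝ≥0∞))^q * ∑' n : ℕ,
        ((2:ℝ≥0∞) ^ ((n:ℝ)/α) * edist x (π (a * (2:ℝ≥0) ^ ((n:ℝ)/α)) x)) ^ q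
        ≤ (1-ρ)⁻¹ * f x := by
      rw [← ENNReal.tsum_mul_left]
      calc ∑' n : ℕ, ((a:ℝ≥0∞))^q * ((2:ℝ≥0∞) ^ ((n:ℝ)/α) *
            edist x (π (a * (2:ℝ≥0) ^ ((n:ℝ)/α)) x)) ^ q
          = ∑' n, v n := tsum_congr huv
        _ ≤ (1-ρ)⁻¹ * f x := htsum
    calc (∑' n : ℕ, ((2:ℝ≥0∞) ^ ((n:ℝ)/α) *
          edist x (π (a * (2:ℝ≥0) ^ ((n:ℝ)/α)) x)) ^ q)
        = (((a:ℝ≥0∞))^q)⁻¹ * (((a:ℝ≥0∞))^q * ∑' n : ℕ, ((2:ℝ≥0∞) ^ ((n:ℝ)/α) *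
            edist x (π (a * (2:ℝ≥0) ^ ((n:ℝ)/α)) x)) ^ q) := by
          rw [← mul_assoc, ENNReal.inv_mul_cancel haq0 haqtop, one_mul]
      _ ≤ (((a:ℝ≥0∞))^q)⁻¹ * ((1-ρ)⁻¹ * f x) := mul_le_mul_right hmain _
      _ = (1-ρ)⁻¹ * (((a:ℝ≥0∞))^q)⁻¹ * f x := by ring
      _ ≤ (1-ρ)⁻¹ * (((a:ℝ≥0∞))^q)⁻¹ * ⨆ x ∈ T, f x := mul_le_mul_right hfle _
end
end

section
/- (Gaussian interpolation lemma.) Let T be a finite set, (X_x)_{x∈T} a centered Gaussian process with natural metric d and Gaussian width functional G, and define K(t,x) := inf_{s≥0} { t·s + G(T) − G(B(x,s)) } where B(x,s) := { y ∈ T : d(x,y) ≤ s }; let s(t,x) ≥ 0 denote a minimizer (which exists since s ↦ G(B(x,s)) is upper-semicontinuous). Then there is a universal constant C such that for every a > 0, sup_{x∈T} Σ_{n≥0} 2^{n/2} s(a·2^{n/2}, x) ≤ C · G(T)/a. -/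
open scoped ENNReal NNReal ProbabilityTheory
open MeasureTheory ProbabilityTheory Set

noncomputable section

universe u v

/-- The natural metric of the process: `d(x,y) = (E|X_x − X_y|²)^{1/2}`. -/
def natDist {Ω : Type u} {ι : Type v} [MeasureSpace Ω] (X : ι → Ω → ℝ) (x y : ι) : ℝ :=
  Real.sqrt (∫ ω, (X x ω - X y ω) ^ 2)

/-- The Gaussian width `G(A) = E[sup_{x∈A} X_x]`. -/
def gWidth {Ω : Type u} {ι : Type v} [MeasureSpace Ω] (X : ι → Ω → ℝ) (A : Set ι) : ℝ :=
  ∫ ω, sSup ((fun x => X x ω) '' A)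

/-- `X` is a centered Gaussian process: every finite linear combination of the
`X_x` is a centered Gaussian random variable. -/
def IsCenteredGaussianProcess {Ω : Type u} {ι : Type v} [MeasureSpace Ω] [Fintype ι]
    (X : ι → Ω → ℝ) : Prop :=
  (∀ x, Measurable (X x)) ∧
    ∀ c : ι → ℝ, ∃ v : ℝ≥0,
      Measure.map (fun ω => ∑ x, c x * X x ω) ℙ = gaussianReal 0 v

section AuxGaussian

lemma myIntegrable_id_gaussianReal (v : ℝ≥0) :
    Integrable (fun x : ℝ => x) (gaussianReal 0 v) := by
  rcases eq_or_ne v 0 with hv | hv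
  · rw [hv, gaussianReal_zero_var]
    refine ⟨aestronglyMeasurable_id, ?_⟩
    simp [HasFiniteIntegral, lintegral_dirac]
  · rw [gaussianReal_of_var_ne_zero _ hv]
    rw [integrable_withDensity_iff (measurable_gaussianPDF _ _)
      (ae_of_all _ fun x => ENNReal.ofReal_lt_top)]
    have hb : (0:ℝ) < (2 * (v:ℝ))⁻¹ := by positivity
    have := (integrable_mul_exp_neg_mul_sq hb).const_mul ((Real.sqrt (2 * Real.pi * v))⁻¹)
    apply this.congr
    filter_upwards with x
    simp only [gaussianPDF]
    rw [ENNReal.toReal_ofReal (gaussianPDFReal_nonneg 0 v x)]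
    simp only [gaussianPDFReal, sub_zero]
    rw [neg_div, div_eq_mul_inv]
    ring_nf

lemma myIntegral_id_gaussianReal (v : ℝ≥0) :
    ∫ x, x ∂(gaussianReal 0 v) = 0 := by
  have hmap : (gaussianReal 0 v).map (fun x => -x) = gaussianReal 0 v := by
    have h := gaussianReal_map_const_mul (μ := 0) (v := v) (-1)
    simp only [neg_one_mul, mul_zero] at h
    rw [h]
    congr 1
    ext : 1; push_cast; norm_num
  have h1 : ∫ x, id x ∂(gaussianReal 0 v) = ∫ x, id (-x) ∂(gaussianReal 0 v) := by
    conv_lhs => rw [← hmap]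
    exact integral_map measurable_neg.aemeasurable aestronglyMeasurable_id
  simp only [id_eq] at h1
  rw [integral_neg (f := fun x : ℝ => x)] at h1
  linarith

end AuxGaussian

section AuxProcess

variable {Ω : Type u} {ι : Type v} [MeasureSpace Ω] [Fintype ι] {X : ι → Ω → ℝ}

lemma map_single (hX : IsCenteredGaussianProcess X) (y : ι) :
    ∃ v : ℝ≥0, Measure.map (X y) ℙ = gaussianReal 0 v := by
  classical
  obtain ⟨v, hv⟩ := hX.2 (fun z => if z = y then 1 else 0)
  refine ⟨v, ?_⟩
  rw [← hv]
  congr 1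
  funext ω
  rw [Finset.sum_congr rfl (fun z _ => by rw [ite_mul, one_mul, zero_mul]),
    Finset.sum_ite_eq' Finset.univ y (fun z => X z ω), if_pos (Finset.mem_univ y)]

lemma integrable_single (hX : IsCenteredGaussianProcess X) (y : ι) :
    Integrable (X y) := by
  obtain ⟨v, hv⟩ := map_single hX y
  have h : Integrable (fun x : ℝ => x) (Measure.map (X y) ℙ) := by
    rw [hv]; exact myIntegrable_id_gaussianReal v
  exact (integrable_map_measure aestronglyMeasurable_id (hX.1 y).aemeasurable).mp h

lemma integral_single (hX : IsCenteredGaussianProcess X) (y : ι) :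
    ∫ ω, X y ω = 0 := by
  obtain ⟨v, hv⟩ := map_single hX y
  have h : ∫ x, (fun x : ℝ => x) x ∂(Measure.map (X y) ℙ) = ∫ ω, X y ω :=
    integral_map (hX.1 y).aemeasurable aestronglyMeasurable_id
  rw [hv, myIntegral_id_gaussianReal v] at h
  exact h.symm

lemma sSup_image_eq (A : Set ι) (hA : A.Nonempty) (f : ι → ℝ) :
    sSup (f '' A) = A.toFinite.toFinset.sup' (by simpa using hA) f := by
  rw [Finset.sup'_eq_csSup_image, Set.Finite.coe_toFinset]

lemma integrable_sup (hX : IsCenteredGaussianProcess X) (A : Set ι) (hA : A.Nonempty) :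
    Integrable (fun ω => sSup ((fun z => X z ω) '' A)) := by
  have hA' : A.toFinite.toFinset.Nonempty := by simpa using hA
  have hmeas : Measurable (fun ω => sSup ((fun z => X z ω) '' A)) := by
    simp only [fun ω => sSup_image_eq A hA (fun z => X z ω)]
    have hm := Finset.measurable_sup' hA' (fun n (_ : n ∈ A.toFinite.toFinset) => hX.1 n)
    convert hm using 1
    funext ω
    exact (Finset.sup'_apply hA' X ω).symm
  refine Integrable.mono' (g := fun ω => ∑ z, |X z ω|)
    (integrable_finset_sum _ (fun z _ => (integrable_single hX z).abs))
    hmeas.aestronglyMeasurable ?_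
  filter_upwards with ω
  rw [Real.norm_eq_abs, abs_le, sSup_image_eq A hA]
  obtain ⟨y0, hy0⟩ := hA'
  constructor
  · refine le_trans ?_ (Finset.le_sup' (fun z => X z ω) hy0)
    have h1 : |X y0 ω| ≤ ∑ z, |X z ω| :=
      Finset.single_le_sum (fun z _ => abs_nonneg (X z ω)) (Finset.mem_univ y0)
    have := neg_abs_le (X y0 ω)
    linarith
  · refine Finset.sup'_le _ _ fun y hy => ?_
    refine le_trans (le_abs_self _) ?_
    exact Finset.single_le_sum (fun z _ => abs_nonneg (X z ω)) (Finset.mem_univ y)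

lemma gWidth_mono (hX : IsCenteredGaussianProcess X) {A B : Set ι} (hA : A.Nonempty)
    (hAB : A ⊆ B) : gWidth X A ≤ gWidth X B := by
  refine integral_mono (integrable_sup hX A hA) (integrable_sup hX B (hA.mono hAB)) fun ω => ?_
  exact csSup_le_csSup ((B.toFinite.image _).bddAbove) (hA.image _) (Set.image_mono hAB)

lemma gWidth_nonneg (hX : IsCenteredGaussianProcess X) {A : Set ι} {x : ι} (hx : x ∈ A) :
    0 ≤ gWidth X A := by
  have h : ∫ ω, X x ω ≤ gWidth X A := by
    refine integral_mono (integrable_single hX x) (integrable_sup hX A ⟨x, hx⟩) fun ω => ?_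
    exact le_csSup ((A.toFinite.image _).bddAbove) (Set.mem_image_of_mem _ hx)
  rwa [integral_single hX x] at h

end AuxProcess

lemma aux_sum_bound (G : ℝ) (hG : 0 ≤ G) (q : ℝ) (hq1 : 1 < q) (hq2 : q * q = 2)
    (t u gn : ℕ → ℝ) (htpos : ∀ n, 0 < t n) (htsucc : ∀ n, t (n+1) = q * t n)
    (hu : ∀ n, 0 ≤ u n) (hgle : ∀ n, gn n ≤ G) (hgnn : ∀ n, 0 ≤ gn n)
    (k1 : ∀ n, t n * u n ≤ G)
    (k2 : ∀ n, t n * u n - t n * u (n+1) ≤ gn n - gn (n+1)) :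
    ∀ N : ℕ, ∑ n ∈ Finset.range N, t n * u n ≤ 6 * G := by
  intro N
  set P : ℝ := ∑ n ∈ Finset.range N, t n * u n with hP
  set Q : ℝ := ∑ n ∈ Finset.range N, t n * u (n + 1) with hQ
  have hQnn : 0 ≤ Q :=
    Finset.sum_nonneg fun n _ => mul_nonneg (htpos n).le (hu (n + 1))
  have hB1 : P - Q ≤ G := by
    have htel : ∑ n ∈ Finset.range N, (gn n - gn (n + 1)) = gn 0 - gn N :=
      Finset.sum_range_sub' gn N
    have h1 : P - Q = ∑ n ∈ Finset.range N, (t n * u n - t n * u (n + 1)) := by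
      rw [hP, hQ, ← Finset.sum_sub_distrib]
    have h2 : ∑ n ∈ Finset.range N, (t n * u n - t n * u (n + 1)) ≤ gn 0 - gn N := by
      rw [← htel]; exact Finset.sum_le_sum fun n _ => k2 n
    have := hgle 0; have := hgnn N
    linarith
  have hQ2 : q * Q ≤ P + G := by
    have h1 : q * Q = ∑ n ∈ Finset.range N, t (n + 1) * u (n + 1) := by
      rw [hQ, Finset.mul_sum]
      exact Finset.sum_congr rfl fun n _ => by rw [htsucc]; ring
    have h2 : ∑ n ∈ Finset.range (N + 1), t n * u n
        = (∑ n ∈ Finset.range N, t (n + 1) * u (n + 1)) + t 0 * u 0 :=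
      Finset.sum_range_succ' (fun n => t n * u n) N
    have h3 : ∑ n ∈ Finset.range (N + 1), t n * u n = P + t N * u N :=
      Finset.sum_range_succ _ N
    have h4 : 0 ≤ t 0 * u 0 := mul_nonneg (htpos 0).le (hu 0)
    have h5 := k1 N
    linarith
  have hq0 : (0:ℝ) < q := by linarith
  have h3 : q * P ≤ q * G + q * Q := by nlinarith [hB1, hq0]
  have h4 : (q - 1) * P ≤ (q + 1) * G := by linarith
  have h5 : 7 ≤ 5 * q := by nlinarith [hq2, hq1]
  have h6 : P ≤ (q + 1) * G / (q - 1) := by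
    rw [le_div_iff₀ (by linarith)]; linarith
  have h7 : (q + 1) * G / (q - 1) ≤ 6 * G := by
    rw [div_le_iff₀ (by linarith)]
    nlinarith [mul_nonneg hG (by linarith : (0:ℝ) ≤ 5 * q - 7)]
  linarith

/-- **Gaussian interpolation lemma** (Lemma 6.3). Let `s(t,x)` minimize
`s ↦ t·s + G(T) − G(B(x,s))` over `s ≥ 0`. Then there is a universal constant `C`
such that `sup_{x∈T} Σ_n 2^{n/2} s(a·2^{n/2}, x) ≤ C·G(T)/a` for every `a > 0`. -/
theorem gaussian_interpolation_lemma :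
    ∃ C : ℝ, 0 < C ∧
      ∀ (Ω : Type u) (ι : Type v) [MeasureSpace Ω] [Fintype ι],
        ∀ _ : IsProbabilityMeasure (ℙ : Measure Ω),
        ∀ X : ι → Ω → ℝ, IsCenteredGaussianProcess X →
        ∀ s : ℝ → ι → ℝ,
          (∀ t : ℝ, 0 ≤ t → ∀ x : ι, 0 ≤ s t x ∧
            ∀ σ : ℝ, 0 ≤ σ →
              t * s t x + gWidth X univ - gWidth X {y | natDist X x y ≤ s t x} ≤
                t * σ + gWidth X univ - gWidth X {y | natDist X x y ≤ σ}) →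
        ∀ a : ℝ, 0 < a → ∀ x : ι,
          ∑' n : ℕ, ENNReal.ofReal
              ((2 : ℝ) ^ ((n : ℝ) / 2) * s (a * (2 : ℝ) ^ ((n : ℝ) / 2)) x) ≤
            ENNReal.ofReal (C * gWidth X univ / a) := by
  refine ⟨6, by norm_num, ?_⟩
  intro Ω ι _ _ hP X hX s hs a ha x
  -- the ball radius function
  have hdxx : natDist X x x = 0 := by
    simp [natDist]
  have hxball : ∀ σ : ℝ, 0 ≤ σ → x ∈ {y | natDist X x y ≤ σ} := fun σ hσ => by
    simpa [hdxx] using hσ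
  set GT : ℝ := gWidth X univ with hGTdef
  have hGTnn : 0 ≤ GT := gWidth_nonneg hX (mem_univ x)
  have hgle : ∀ σ : ℝ, 0 ≤ σ → gWidth X {y | natDist X x y ≤ σ} ≤ GT := fun σ hσ =>
    gWidth_mono hX ⟨x, hxball σ hσ⟩ (subset_univ _)
  have hgnn : ∀ σ : ℝ, 0 ≤ σ → 0 ≤ gWidth X {y | natDist X x y ≤ σ} := fun σ hσ =>
    gWidth_nonneg hX (hxball σ hσ)
  -- the geometric scales
  set q : ℝ := (2 : ℝ) ^ ((1 : ℝ) / 2) with hqdef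
  have hq1 : 1 < q := Real.one_lt_rpow_iff_of_pos two_pos |>.mpr (Or.inl ⟨one_lt_two, by norm_num⟩)
  have hq2 : q * q = 2 := by
    rw [hqdef, ← Real.rpow_add two_pos]
    norm_num
  set t : ℕ → ℝ := fun n => a * (2 : ℝ) ^ ((n : ℝ) / 2) with htdef
  have htpos : ∀ n, 0 < t n := fun n => mul_pos ha (Real.rpow_pos_of_pos two_pos _)
  have htsucc : ∀ n, t (n + 1) = q * t n := by
    intro n
    rw [htdef, hqdef]
    simp only
    rw [show (((n + 1 : ℕ) : ℝ)) / 2 = (1 : ℝ) / 2 + (n : ℝ) / 2 by push_cast; ring,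
      Real.rpow_add two_pos]
    ring
  set u : ℕ → ℝ := fun n => s (t n) x with hudef
  have hupos : ∀ n, 0 ≤ u n := fun n => (hs (t n) (htpos n).le x).1
  set gn : ℕ → ℝ := fun n => gWidth X {y | natDist X x y ≤ u n} with hgndef
  have key1 : ∀ n, t n * u n ≤ GT := by
    intro n
    have h := (hs (t n) (htpos n).le x).2 0 le_rfl
    have h1 := hgle (u n) (hupos n)
    have h2 := hgnn 0 le_rfl
    simp only [mul_zero] at h
    linarith
  have key2 : ∀ n, t n * u n - t n * u (n + 1) ≤ gn n - gn (n + 1) := by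
    intro n
    have h := (hs (t n) (htpos n).le x).2 (u (n + 1)) (hupos (n + 1))
    simp only [hgndef]
    linarith
  have hsum := aux_sum_bound GT hGTnn q hq1 hq2 t u gn htpos htsucc hupos
    (fun n => hgle (u n) (hupos n)) (fun n => hgnn (u n) (hupos n)) key1 key2
  -- transfer to the normalized sums
  have hsum' : ∀ N : ℕ, ∑ n ∈ Finset.range N, (2 : ℝ) ^ ((n : ℝ) / 2) * u n ≤ 6 * GT / a := by
    intro N
    rw [le_div_iff₀ ha]
    calc (∑ n ∈ Finset.range N, (2 : ℝ) ^ ((n : ℝ) / 2) * u n) * a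
        = ∑ n ∈ Finset.range N, t n * u n := by
          rw [Finset.sum_mul]
          exact Finset.sum_congr rfl fun n _ => by rw [htdef]; ring
      _ ≤ 6 * GT := hsum N
  -- conclude for the tsum
  have hterm : ∀ n : ℕ, (0:ℝ) ≤ (2 : ℝ) ^ ((n : ℝ) / 2) * u n := fun n =>
    mul_nonneg (Real.rpow_nonneg (by norm_num) _) (hupos n)
  calc ∑' n : ℕ, ENNReal.ofReal ((2 : ℝ) ^ ((n : ℝ) / 2) * s (a * (2 : ℝ) ^ ((n : ℝ) / 2)) x)
      = ∑' n : ℕ, ENNReal.ofReal ((2 : ℝ) ^ ((n : ℝ) / 2) * u n) := rfl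
    _ ≤ ENNReal.ofReal (6 * GT / a) := by
        rw [ENNReal.tsum_eq_iSup_sum]
        refine iSup_le fun F => ?_
        obtain ⟨N, hN⟩ := F.exists_nat_subset_range
        calc ∑ n ∈ F, ENNReal.ofReal ((2 : ℝ) ^ ((n : ℝ) / 2) * u n)
            ≤ ∑ n ∈ Finset.range N, ENNReal.ofReal ((2 : ℝ) ^ ((n : ℝ) / 2) * u n) :=
              Finset.sum_le_sum_of_subset hN
          _ = ENNReal.ofReal (∑ n ∈ Finset.range N, (2 : ℝ) ^ ((n : ℝ) / 2) * u n) :=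
              (ENNReal.ofReal_sum_of_nonneg fun n _ => hterm n).symm
          _ ≤ ENNReal.ofReal (6 * GT / a) := ENNReal.ofReal_le_ofReal (hsum' N)
end
end
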